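/- arXiv:1808.09387 — 7 statements merged into one kernel-verified Lean document; each statement's English description precedes it below -/
import Mathlib

section
/- Let G be a simple graph with distinct vertices a and b, and let H be the shortest path graph S(G,a,b). If (U₀,U₁,U₂) is a triangle in H and U is a vertex of H distinct from U₀,U₁,U₂ with U adjacent to U₀, then U is adjacent to both U₁ and U₂, or U is adjacent to neither U₁ nor U₂. -/
open SimpleGraph

variable {V : Type*}

/-- An `(a,b)`-geodesic in `G`: a shortest path from `a` to `b`. -/
def Geodesic (G : SimpleGraph V) (a b : V) : Type _ :=
  {p : G.Walk a b // p.IsPath ∧ p.length = G.dist a b}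

/-- The set of index levels at which two geodesics differ
(position `i` in the support list is index level `i`; position `0` is `a`). -/
def diffIndices (G : SimpleGraph V) (a b : V) (U W : Geodesic G a b) : Set ℕ :=
  {i | U.1.support[i]? ≠ W.1.support[i]?}

/-- The shortest path graph `S(G,a,b)`: vertices are the `(a,b)`-geodesics,
two geodesics being adjacent iff they differ at exactly one index level. -/
def SPG (G : SimpleGraph V) (a b : V) : SimpleGraph (Geodesic G a b) where
  Adj U W := ∃! i, i ∈ diffIndices G a b U W
  symm := by
    constructor
    rintro U W ⟨i, hi, hu⟩
    exact ⟨i, Ne.symm hi, fun j hj => hu j (Ne.symm hj)⟩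
  loopless := by
    constructor
    rintro U ⟨i, hi, -⟩
    exact hi rfl

lemma walk_support_inj {G : SimpleGraph V} :
    ∀ {a b : V} (p q : G.Walk a b), p.support = q.support → p = q := by
  intro a b p
  induction p with
  | nil =>
    intro q h
    cases q with
    | nil => rfl
    | cons h' q' => simp [Walk.support_cons] at h
  | cons h p ih =>
    intro q hq
    cases q with
    | nil => simp [Walk.support_cons] at hq
    | cons h' q' =>
      simp only [Walk.support_cons, List.cons.injEq, true_and] at hq
      have hc := congrArg List.head? hq
      rw [Walk.support_eq_cons p, Walk.support_eq_cons q'] at hc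
      simp only [List.head?_cons, Option.some.injEq] at hc
      subst hc
      rw [ih q' hq]

lemma geo_ext {G : SimpleGraph V} {a b : V} {U W : Geodesic G a b}
    (h : ∀ i : ℕ, U.1.support[i]? = W.1.support[i]?) : U = W :=
  Subtype.ext (walk_support_inj _ _ (List.ext_getElem? fun n => by
    exact h n))

/-- triangle neighbor dichotomy. -/
theorem stmt_0 {V : Type*} (G : SimpleGraph V) (a b : V) (hab : a ≠ b)
    (U₀ U₁ U₂ U : Geodesic G a b)
    (h01 : (SPG G a b).Adj U₀ U₁) (h12 : (SPG G a b).Adj U₁ U₂)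
    (h02 : (SPG G a b).Adj U₀ U₂)
    (hU0 : U ≠ U₀) (hU1 : U ≠ U₁) (hU2 : U ≠ U₂)
    (hadj : (SPG G a b).Adj U U₀) :
    ((SPG G a b).Adj U U₁ ∧ (SPG G a b).Adj U U₂) ∨
      (¬ (SPG G a b).Adj U U₁ ∧ ¬ (SPG G a b).Adj U U₂) := by
  obtain ⟨i, hi01, hu01⟩ := h01
  obtain ⟨j, hj12, hu12⟩ := h12
  obtain ⟨k, hk02, hu02⟩ := h02
  obtain ⟨m, hm, hum⟩ := hadj
  simp only [diffIndices, Set.mem_setOf_eq] at hi01 hu01 hj12 hu12 hk02 hu02 hm hum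
  -- all three triangle differences are at the same index
  have hij : i = j := by
    by_contra hne
    have h1 : U₁.1.support[i]? = U₂.1.support[i]? := by
      by_contra hx; exact hne (hu12 i hx)
    have hik : i = k := hu02 i (by rw [h1] at hi01; exact hi01)
    have h2 : U₀.1.support[j]? = U₁.1.support[j]? := by
      by_contra hx; exact hne (hu01 j hx).symm
    have hjk : j = k := hu02 j (by rw [h2]; exact hj12)
    exact hne (hik.trans hjk.symm)
  cases hij
  have hki : k = i := by
    by_cases hx : U₀.1.support[k]? = U₁.1.support[k]?
    · exact hu12 k (by rw [← hx]; exact hk02)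
    · exact hu01 k hx
  have hki' : i = k := hki.symm
  cases hki'
  -- at index i, the three are pairwise distinct; off i, all equal
  have hoff01 : ∀ t, t ≠ i → U₀.1.support[t]? = U₁.1.support[t]? := fun t ht => by
    by_contra hx; exact ht (hu01 t hx)
  have hoff02 : ∀ t, t ≠ i → U₀.1.support[t]? = U₂.1.support[t]? := fun t ht => by
    by_contra hx; exact ht (hu02 t hx)
  have hoffU : ∀ t, t ≠ m → U.1.support[t]? = U₀.1.support[t]? := fun t ht => by
    by_contra hx; exact ht (hum t hx)
  by_cases hmi : m = i
  · subst hmi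
    left
    constructor
    · refine ⟨m, ?_, ?_⟩
      · intro heq
        refine hU1 (geo_ext fun t => ?_)
        by_cases ht : t = m
        · subst ht; exact heq
        · exact (hoffU t ht).trans (hoff01 t ht)
      · intro t ht
        by_contra htm
        exact ht ((hoffU t htm).trans (hoff01 t htm))
    · refine ⟨m, ?_, ?_⟩
      · intro heq
        refine hU2 (geo_ext fun t => ?_)
        by_cases ht : t = m
        · subst ht; exact heq
        · exact (hoffU t ht).trans (hoff02 t ht)
      · intro t ht
        by_contra htm
        exact ht ((hoffU t htm).trans (hoff02 t htm))
  · right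
    constructor
    · rintro ⟨t, ht, hut⟩
      have e1 : i = t := hut i (by
        show i ∈ diffIndices G a b U U₁
        simp only [diffIndices, Set.mem_setOf_eq]
        rw [hoffU i (fun h => hmi h.symm)]; exact hi01)
      have e2 : m = t := hut m (by
        show m ∈ diffIndices G a b U U₁
        simp only [diffIndices, Set.mem_setOf_eq]
        rw [← hoff01 m hmi]; exact hm)
      exact hmi (e2.trans e1.symm)
    · rintro ⟨t, ht, hut⟩
      have e1 : i = t := hut i (by
        show i ∈ diffIndices G a b U U₂
        simp only [diffIndices, Set.mem_setOf_eq]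
        rw [hoffU i (fun h => hmi h.symm)]; exact hk02)
      have e2 : m = t := hut m (by
        show m ∈ diffIndices G a b U U₂
        simp only [diffIndices, Set.mem_setOf_eq]
        rw [← hoff02 m hmi]; exact hm)
      exact hmi (e2.trans e1.symm)
end

section
/- A shortest path graph S(G,a,b) is a complete graph if and only if there exists a single index level i such that every pair of distinct (a,b)-geodesics in G differs exactly at index level i. -/
open SimpleGraph

variable {V : Type*}

lemma diffIndices_comm (G : SimpleGraph V) (a b : V) (U W : Geodesic G a b) :
    diffIndices G a b U W = diffIndices G a b W U := by
  ext k; simp [diffIndices, ne_comm]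

/-- `S(G,a,b)` is complete iff all geodesics pairwise differ at one common index. -/
theorem stmt_7 {V : Type*} (G : SimpleGraph V) (a b : V) (hab : a ≠ b)
    (hne : Nonempty (Geodesic G a b)) :
    (∀ U W : Geodesic G a b, U ≠ W → (SPG G a b).Adj U W) ↔
      ∃ i : ℕ, ∀ U W : Geodesic G a b, U ≠ W → diffIndices G a b U W = {i} := by
  classical
  constructor
  · intro hcomp
    by_cases h : ∃ U W : Geodesic G a b, U ≠ W
    · obtain ⟨U, W, hUW⟩ := h
      obtain ⟨i, hi, hiu⟩ := hcomp U W hUW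
      have key : ∀ X : Geodesic G a b, X ≠ U → diffIndices G a b U X = {i} := by
        intro X hXU
        obtain ⟨j, hj, hju⟩ := hcomp U X (Ne.symm hXU)
        have hset : diffIndices G a b U X = {j} :=
          Set.eq_singleton_iff_unique_mem.mpr ⟨hj, hju⟩
        rcases eq_or_ne j i with rfl | hji
        · exact hset
        · exfalso
          have hXW : X ≠ W := by
            rintro rfl
            exact hji (hiu j hj)
          obtain ⟨k, hk, hku⟩ := hcomp X W hXW
          have hiXW : i ∈ diffIndices G a b X W := by
            have h1 : U.1.support[i]? = X.1.support[i]? := by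
              by_contra hc
              exact hji (hju i hc).symm
            simpa [diffIndices, ← h1] using hi
          have hjXW : j ∈ diffIndices G a b X W := by
            have h1 : U.1.support[j]? = W.1.support[j]? := by
              by_contra hc
              exact hji (hiu j hc)
            have : X.1.support[j]? ≠ W.1.support[j]? := by
              rw [← h1]
              exact fun hc => hj hc.symm
            exact this
          exact hji ((hku j hjXW).trans (hku i hiXW).symm)
      refine ⟨i, ?_⟩
      intro X Y hXY
      rcases eq_or_ne X U with rfl | hX
      · exact key Y (Ne.symm hXY)
      · rcases eq_or_ne Y U with rfl | hY
        · rw [diffIndices_comm]; exact key X hX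
        · obtain ⟨k, hk, hku⟩ := hcomp X Y hXY
          have hset : diffIndices G a b X Y = {k} :=
            Set.eq_singleton_iff_unique_mem.mpr ⟨hk, hku⟩
          have hXU := key X hX
          have hYU := key Y hY
          have hki : k = i := by
            by_contra hki
            have h1 : U.1.support[k]? = X.1.support[k]? := by
              by_contra hc
              have : k ∈ diffIndices G a b U X := hc
              rw [hXU] at this
              exact hki this
            have h2 : U.1.support[k]? = Y.1.support[k]? := by
              by_contra hc
              have : k ∈ diffIndices G a b U Y := hc
              rw [hYU] at this
              exact hki this
            exact hk (h1 ▸ h2 ▸ rfl)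
          rw [hset, hki]
    · push_neg at h
      exact ⟨0, fun U W hUW => absurd (h U W) hUW⟩
  · rintro ⟨i, hi⟩ U W hUW
    refine ⟨i, ?_, ?_⟩
    · show i ∈ diffIndices G a b U W
      rw [hi U W hUW]; rfl
    · intro j hj
      have : j ∈ diffIndices G a b U W := hj
      rw [hi U W hUW] at this
      exact this
end

section
/- If H₁ = S(G₁,a₁,b₁) and H₂ = S(G₂,a₂,b₂) are shortest path graphs, then their disjoint union H₁ ∪ H₂ is also a shortest path graph: there exist a graph G and vertices a,b such that S(G,a,b) is isomorphic to the disjoint union of H₁ and H₂. -/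
open SimpleGraph

variable {V : Type*}

namespace S9
open SimpleGraph Walk

universe u

inductive Pt (V₁ V₂ : Type u) : Type u
  | A : Pt V₁ V₂
  | B : Pt V₁ V₂
  | L : V₁ → Pt V₁ V₂
  | R : V₂ → Pt V₁ V₂
  | PL : ℕ → Pt V₁ V₂
  | PR : ℕ → Pt V₁ V₂


variable {V : Type*} {G : SimpleGraph V}

lemma cons_eq_cons_iff {u v w : V} {h : G.Adj u v} {h' : G.Adj u v} {p p' : G.Walk v w} :
    Walk.cons h p = Walk.cons h' p' ↔ p = p' := by
  constructor
  · intro he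
    simp only [Walk.cons.injEq, heq_eq_eq, true_and] at he
    exact he
  · rintro rfl; rfl

lemma append_left_cancel {u v w : V} (p : G.Walk u v) {q q' : G.Walk v w}
    (h : p.append q = p.append q') : q = q' := by
  induction p with
  | nil => simpa using h
  | cons ha p ih =>
    rw [Walk.cons_append, Walk.cons_append, cons_eq_cons_iff] at h
    exact ih h

lemma append_right_cancel {u v w : V} {p p' : G.Walk u v} (t : G.Walk v w)
    (hl : p.length = p'.length) (h : p.append t = p'.append t) : p = p' := by
  induction p with
  | nil =>
    cases p' with
    | nil => rfl
    | cons ha q => simp at hl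
  | cons ha p ih =>
    cases p' with
    | nil => simp at hl
    | cons ha' q =>
      rw [Walk.cons_append, Walk.cons_append] at h
      simp only [Walk.cons.injEq] at h
      obtain ⟨hv, hp⟩ := h
      subst hv
      simp only [Walk.length_cons, add_left_inj] at hl
      rw [ih t hl (eq_of_heq hp)]

lemma isPath_closed {u : V} {p : G.Walk u u} (h : p.IsPath) : p = Walk.nil :=
  Walk.isPath_iff_eq_nil.mp h


namespace Pt

variable {V₁ V₂ : Type u}

section

variable (G₁ : SimpleGraph V₁) (a₁ b₁ : V₁) (m₁ : ℕ)
  (G₂ : SimpleGraph V₂) (a₂ b₂ : V₂) (m₂ : ℕ)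

inductive Rel : Pt V₁ V₂ → Pt V₁ V₂ → Prop
  | AL : Rel A (PL 0)
  | AR : Rel A (PR 0)
  | stepL (j : ℕ) (h : j + 1 < m₁) : Rel (PL j) (PL (j + 1))
  | endL : Rel (PL (m₁ - 1)) (L a₁)
  | edgeL (u v : V₁) (h : G₁.Adj u v) : Rel (L u) (L v)
  | LB : Rel (L b₁) B
  | stepR (j : ℕ) (h : j + 1 < m₂) : Rel (PR j) (PR (j + 1))
  | endR : Rel (PR (m₂ - 1)) (R a₂)
  | edgeR (u v : V₂) (h : G₂.Adj u v) : Rel (R u) (R v)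
  | RB : Rel (R b₂) B

def Gr : SimpleGraph (Pt V₁ V₂) := fromRel (Rel G₁ a₁ b₁ m₁ G₂ a₂ b₂ m₂)

local notation "GG" => Gr G₁ a₁ b₁ m₁ G₂ a₂ b₂ m₂
local notation "RR" => Rel G₁ a₁ b₁ m₁ G₂ a₂ b₂ m₂

variable {G₁ a₁ b₁ m₁ G₂ a₂ b₂ m₂}

lemma adj_cases {x y : Pt V₁ V₂} (h : (GG).Adj x y) : RR x y ∨ RR y x :=
  ((fromRel_adj _ x y).mp h).2

lemma adj_of_rel {x y : Pt V₁ V₂} (h : RR x y) (hne : x ≠ y) : (GG).Adj x y :=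
  (fromRel_adj _ x y).mpr ⟨hne, Or.inl h⟩

lemma adj_A_PL0 : (GG).Adj A (PL 0) := adj_of_rel Rel.AL (by simp)
lemma adj_A_PR0 : (GG).Adj A (PR 0) := adj_of_rel Rel.AR (by simp)
lemma adj_PL_step {j : ℕ} (h : j + 1 < m₁) : (GG).Adj (PL j) (PL (j + 1)) :=
  adj_of_rel (Rel.stepL j h) (by simp)
lemma adj_PL_end : (GG).Adj (PL (m₁ - 1)) (L a₁) := adj_of_rel Rel.endL (by simp)
lemma adj_L {u v : V₁} (h : G₁.Adj u v) : (GG).Adj (L u) (L v) :=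
  adj_of_rel (Rel.edgeL u v h) (by simp [h.ne])
lemma adj_LB : (GG).Adj (L b₁) B := adj_of_rel Rel.LB (by simp)
lemma adj_PR_step {j : ℕ} (h : j + 1 < m₂) : (GG).Adj (PR j) (PR (j + 1)) :=
  adj_of_rel (Rel.stepR j h) (by simp)
lemma adj_PR_end : (GG).Adj (PR (m₂ - 1)) (R a₂) := adj_of_rel Rel.endR (by simp)
lemma adj_R {u v : V₂} (h : G₂.Adj u v) : (GG).Adj (R u) (R v) :=
  adj_of_rel (Rel.edgeR u v h) (by simp [h.ne])
lemma adj_RB : (GG).Adj (R b₂) B := adj_of_rel Rel.RB (by simp)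

variable (G₁ a₁ b₁ m₁ G₂ a₂ b₂ m₂)

/-- Graph hom of `G₁` into the glued graph. -/
@[reducible]
def homL : G₁ →g GG where
  toFun := L
  map_rel' h := adj_L h

@[reducible]
def homR : G₂ →g GG where
  toFun := R
  map_rel' h := adj_R h

@[simp] lemma homL_coe : ⇑(homL G₁ a₁ b₁ m₁ G₂ a₂ b₂ m₂) = L := rfl
@[simp] lemma homR_coe : ⇑(homR G₁ a₁ b₁ m₁ G₂ a₂ b₂ m₂) = R := rfl

@[simp] lemma homL_apply (v : V₁) : homL G₁ a₁ b₁ m₁ G₂ a₂ b₂ m₂ v = L v := rfl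
@[simp] lemma homR_apply (v : V₂) : homR G₁ a₁ b₁ m₁ G₂ a₂ b₂ m₂ v = R v := rfl

/-- The ascent walk in the left pad from `PL j` to `L a₁`, with `j + k + 1 = m₁`. -/
def ascentL : (k j : ℕ) → j + k + 1 = m₁ → (GG).Walk (PL j) (L a₁)
  | 0, j, h => Walk.cons (by
      have : j = m₁ - 1 := by omega
      subst this; exact adj_PL_end) Walk.nil
  | (k+1), j, h => Walk.cons (adj_PL_step (by omega)) (ascentL k (j+1) (by omega))

def ascentR : (k j : ℕ) → j + k + 1 = m₂ → (GG).Walk (PR j) (R a₂)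
  | 0, j, h => Walk.cons (by
      have : j = m₂ - 1 := by omega
      subst this; exact adj_PR_end) Walk.nil
  | (k+1), j, h => Walk.cons (adj_PR_step (by omega)) (ascentR k (j+1) (by omega))

@[simp] lemma ascentL_length (k j : ℕ) (h : j + k + 1 = m₁) :
    (ascentL G₁ a₁ b₁ m₁ G₂ a₂ b₂ m₂ k j h).length = k + 1 := by
  induction k generalizing j with
  | zero => simp [ascentL]
  | succ k ih => simp [ascentL, ih]

lemma ascentL_support (k j : ℕ) (h : j + k + 1 = m₁) :
    (ascentL G₁ a₁ b₁ m₁ G₂ a₂ b₂ m₂ k j h).support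
      = (List.range' j (k + 1)).map PL ++ [L a₁] := by
  induction k generalizing j with
  | zero => simp [ascentL]
  | succ k ih => simp [ascentL, ih, List.range'_succ]

lemma ascentR_support (k j : ℕ) (h : j + k + 1 = m₂) :
    (ascentR G₁ a₁ b₁ m₁ G₂ a₂ b₂ m₂ k j h).support
      = (List.range' j (k + 1)).map PR ++ [R a₂] := by
  induction k generalizing j with
  | zero => simp [ascentR]
  | succ k ih => simp [ascentR, ih, List.range'_succ]

lemma ascentR_length (k j : ℕ) (h : j + k + 1 = m₂) :
    (ascentR G₁ a₁ b₁ m₁ G₂ a₂ b₂ m₂ k j h).length = k + 1 := by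
  induction k generalizing j with
  | zero => simp [ascentR]
  | succ k ih => simp [ascentR, ih]

/-- The canonical `A`–`B` walk through the left side built from `q`. -/
def walkL (hm : 0 < m₁) (q : G₁.Walk a₁ b₁) : (GG).Walk A B :=
  Walk.cons adj_A_PL0 ((ascentL G₁ a₁ b₁ m₁ G₂ a₂ b₂ m₂ (m₁ - 1) 0 (by omega)).append
    ((q.map (homL G₁ a₁ b₁ m₁ G₂ a₂ b₂ m₂)).append (Walk.cons adj_LB Walk.nil)))

def walkR (hm : 0 < m₂) (q : G₂.Walk a₂ b₂) : (GG).Walk A B :=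
  Walk.cons adj_A_PR0 ((ascentR G₁ a₁ b₁ m₁ G₂ a₂ b₂ m₂ (m₂ - 1) 0 (by omega)).append
    ((q.map (homR G₁ a₁ b₁ m₁ G₂ a₂ b₂ m₂)).append (Walk.cons adj_RB Walk.nil)))

lemma walkL_length (hm : 0 < m₁) (q : G₁.Walk a₁ b₁) :
    (walkL G₁ a₁ b₁ m₁ G₂ a₂ b₂ m₂ hm q).length = m₁ + q.length + 2 := by
  simp [walkL, Walk.length_append, Walk.length_cons, Walk.length_map, ascentL_length]
  omega

lemma walkR_length (hm : 0 < m₂) (q : G₂.Walk a₂ b₂) :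
    (walkR G₁ a₁ b₁ m₁ G₂ a₂ b₂ m₂ hm q).length = m₂ + q.length + 2 := by
  simp [walkR, Walk.length_append, Walk.length_cons, Walk.length_map, ascentR_length]
  omega

lemma walkL_support (hm : 0 < m₁) (q : G₁.Walk a₁ b₁) :
    (walkL G₁ a₁ b₁ m₁ G₂ a₂ b₂ m₂ hm q).support
      = A :: ((List.range' 0 m₁).map PL ++ (q.support.map L ++ [B])) := by
  have h1 : m₁ - 1 + 1 = m₁ := by omega
  rw [walkL, Walk.support_cons, Walk.support_append, ascentL_support,
    Walk.support_append, Walk.support_map]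
  rw [Walk.support_eq_cons q]
  simp [h1, List.append_assoc]
  cases q <;> simp

lemma walkR_support (hm : 0 < m₂) (q : G₂.Walk a₂ b₂) :
    (walkR G₁ a₁ b₁ m₁ G₂ a₂ b₂ m₂ hm q).support
      = A :: ((List.range' 0 m₂).map PR ++ (q.support.map R ++ [B])) := by
  have h1 : m₂ - 1 + 1 = m₂ := by omega
  rw [walkR, Walk.support_cons, Walk.support_append, ascentR_support,
    Walk.support_append, Walk.support_map]
  rw [Walk.support_eq_cons q]
  simp [h1, List.append_assoc]
  cases q <;> simp

lemma L_inj : Function.Injective (L : V₁ → Pt V₁ V₂) := fun a b h => by injection h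
lemma R_inj : Function.Injective (R : V₂ → Pt V₁ V₂) := fun a b h => by injection h
lemma PL_inj : Function.Injective (PL : ℕ → Pt V₁ V₂) := fun a b h => by injection h
lemma PR_inj : Function.Injective (PR : ℕ → Pt V₁ V₂) := fun a b h => by injection h

lemma walkL_isPath (hm : 0 < m₁) (q : G₁.Walk a₁ b₁) (hq : q.IsPath) :
    (walkL G₁ a₁ b₁ m₁ G₂ a₂ b₂ m₂ hm q).IsPath := by
  rw [Walk.isPath_def, walkL_support]
  have h1 : ((List.range' 0 m₁).map (PL : ℕ → Pt V₁ V₂)).Nodup :=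
    (List.nodup_range' (s := 0) (n := m₁) 1 one_pos).map PL_inj
  have h2 : (q.support.map (L : V₁ → Pt V₁ V₂)).Nodup :=
    hq.support_nodup.map L_inj
  simp only [List.nodup_cons, List.nodup_append, List.mem_append, List.mem_map,
    List.mem_singleton, List.nodup_singleton, List.disjoint_singleton,
    List.mem_cons]
  refine ⟨?_, h1, ⟨h2, by simp, ?_⟩, ?_⟩ <;> simp +contextual [List.Disjoint]
  rintro a - b (⟨c, -, rfl⟩ | rfl) h <;> cases h

lemma walkR_isPath (hm : 0 < m₂) (q : G₂.Walk a₂ b₂) (hq : q.IsPath) :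
    (walkR G₁ a₁ b₁ m₁ G₂ a₂ b₂ m₂ hm q).IsPath := by
  rw [Walk.isPath_def, walkR_support]
  have h1 : ((List.range' 0 m₂).map (PR : ℕ → Pt V₁ V₂)).Nodup :=
    (List.nodup_range' (s := 0) (n := m₂) 1 one_pos).map PR_inj
  have h2 : (q.support.map (R : V₂ → Pt V₁ V₂)).Nodup :=
    hq.support_nodup.map R_inj
  simp only [List.nodup_cons, List.nodup_append, List.mem_append, List.mem_map,
    List.mem_singleton, List.nodup_singleton, List.disjoint_singleton,
    List.mem_cons]
  refine ⟨?_, h1, ⟨h2, by simp, ?_⟩, ?_⟩ <;> simp +contextual [List.Disjoint]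
  rintro a - b (⟨c, -, rfl⟩ | rfl) h <;> cases h

lemma walkL_isPath_rev (hm : 0 < m₁) (q : G₁.Walk a₁ b₁)
    (h : (walkL G₁ a₁ b₁ m₁ G₂ a₂ b₂ m₂ hm q).IsPath) : q.IsPath := by
  have h2 := h.of_cons.of_append_right.of_append_left
  rwa [Walk.map_isPath_iff_of_injective L_inj] at h2

lemma walkR_isPath_rev (hm : 0 < m₂) (q : G₂.Walk a₂ b₂)
    (h : (walkR G₁ a₁ b₁ m₁ G₂ a₂ b₂ m₂ hm q).IsPath) : q.IsPath := by
  have h2 := h.of_cons.of_append_right.of_append_left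
  rwa [Walk.map_isPath_iff_of_injective R_inj] at h2

lemma walkL_inj (hm : 0 < m₁) {q q' : G₁.Walk a₁ b₁}
    (h : walkL G₁ a₁ b₁ m₁ G₂ a₂ b₂ m₂ hm q = walkL G₁ a₁ b₁ m₁ G₂ a₂ b₂ m₂ hm q') :
    q = q' := by
  rw [walkL, walkL, cons_eq_cons_iff] at h
  have h2 := append_left_cancel _ h
  have hlen : (q.map (homL G₁ a₁ b₁ m₁ G₂ a₂ b₂ m₂)).length
      = (q'.map (homL G₁ a₁ b₁ m₁ G₂ a₂ b₂ m₂)).length := by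
    have := congrArg Walk.length h2
    simpa using this
  have h3 := append_right_cancel _ hlen h2
  exact Walk.map_injective_of_injective L_inj _ _ h3

lemma walkR_inj (hm : 0 < m₂) {q q' : G₂.Walk a₂ b₂}
    (h : walkR G₁ a₁ b₁ m₁ G₂ a₂ b₂ m₂ hm q = walkR G₁ a₁ b₁ m₁ G₂ a₂ b₂ m₂ hm q') :
    q = q' := by
  rw [walkR, walkR, cons_eq_cons_iff] at h
  have h2 := append_left_cancel _ h
  have hlen : (q.map (homR G₁ a₁ b₁ m₁ G₂ a₂ b₂ m₂)).length
      = (q'.map (homR G₁ a₁ b₁ m₁ G₂ a₂ b₂ m₂)).length := by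
    have := congrArg Walk.length h2
    simpa using this
  have h3 := append_right_cancel _ hlen h2
  exact Walk.map_injective_of_injective R_inj _ _ h3

lemma walkL_ne_walkR (hm₁ : 0 < m₁) (hm₂ : 0 < m₂) (q : G₁.Walk a₁ b₁) (q' : G₂.Walk a₂ b₂) :
    walkL G₁ a₁ b₁ m₁ G₂ a₂ b₂ m₂ hm₁ q ≠ walkR G₁ a₁ b₁ m₁ G₂ a₂ b₂ m₂ hm₂ q' := by
  intro h
  obtain ⟨k₁, rfl⟩ : ∃ k, m₁ = k + 1 := ⟨m₁ - 1, by omega⟩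
  obtain ⟨k₂, rfl⟩ : ∃ k, m₂ = k + 1 := ⟨m₂ - 1, by omega⟩
  have h2 : (walkL G₁ a₁ b₁ (k₁ + 1) G₂ a₂ b₂ (k₂ + 1) hm₁ q).support[1]?
      = (walkR G₁ a₁ b₁ (k₁ + 1) G₂ a₂ b₂ (k₂ + 1) hm₂ q').support[1]? := by rw [h]
  rw [walkL_support, walkR_support] at h2
  simp [List.range'_succ] at h2

lemma padStuck : ∀ (x e : Pt V₁ V₂) (p : (GG).Walk x e), (∃ j : ℕ, x = PL j) → e = B →
    A ∉ p.support → L a₁ ∉ p.support → False := by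
  intro x e p
  induction p with
  | nil =>
    rintro ⟨j, rfl⟩ he
    simp at he
  | @cons u y e h p' ih =>
    rintro ⟨j, rfl⟩ rfl hA hL
    simp only [Walk.support_cons, List.mem_cons, not_or] at hA hL
    rcases adj_cases h with hr | hr
    · cases hr with
      | stepL j hj => exact ih ⟨j + 1, rfl⟩ rfl hA.2 hL.2
      | endL => exact hL.2 (Walk.start_mem_support p')
    · cases hr with
      | AL => exact hA.2 (Walk.start_mem_support p')
      | stepL j' hj' => exact ih ⟨j', rfl⟩ rfl hA.2 hL.2

lemma padStuckR : ∀ (x e : Pt V₁ V₂) (p : (GG).Walk x e), (∃ j : ℕ, x = PR j) → e = B →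
    A ∉ p.support → R a₂ ∉ p.support → False := by
  intro x e p
  induction p with
  | nil =>
    rintro ⟨j, rfl⟩ he
    simp at he
  | @cons u y e h p' ih =>
    rintro ⟨j, rfl⟩ rfl hA hL
    simp only [Walk.support_cons, List.mem_cons, not_or] at hA hL
    rcases adj_cases h with hr | hr
    · cases hr with
      | stepR j hj => exact ih ⟨j + 1, rfl⟩ rfl hA.2 hL.2
      | endR => exact hL.2 (Walk.start_mem_support p')
    · cases hr with
      | AR => exact hA.2 (Walk.start_mem_support p')
      | stepR j' hj' => exact ih ⟨j', rfl⟩ rfl hA.2 hL.2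

lemma sideL_decomp : ∀ (n : ℕ) (v : V₁) (p : (GG).Walk (L v) B), p.length = n → p.IsPath →
    A ∉ p.support →
    ∃ q : G₁.Walk v b₁,
      p = (q.map (homL G₁ a₁ b₁ m₁ G₂ a₂ b₂ m₂)).append (Walk.cons adj_LB Walk.nil) := by
  intro n
  induction n using Nat.strong_induction_on with
  | _ n ih =>
  intro v p hn hp hA
  cases p with
  | @cons _ y _ h p' =>
    simp only [Walk.support_cons, List.mem_cons, not_or] at hA
    simp only [Walk.length_cons] at hn
    rcases adj_cases h with hr | hr
    · cases hr with
      | edgeL u v' h₁ =>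
        obtain ⟨q', hq'⟩ := ih p'.length (by omega) v' p' rfl hp.of_cons hA.2
        refine ⟨Walk.cons h₁ q', ?_⟩
        rw [Walk.map_cons, Walk.cons_append, cons_eq_cons_iff]
        exact hq'
      | LB =>
        have hnil : p' = Walk.nil := isPath_closed hp.of_cons
        subst hnil
        exact ⟨Walk.nil, rfl⟩
    · cases hr with
      | endL =>
        exact (padStuck G₁ a₁ b₁ m₁ G₂ a₂ b₂ m₂ _ _ p' ⟨m₁ - 1, rfl⟩ rfl hA.2
          ((Walk.cons_isPath_iff _ _).mp hp).2).elim
      | edgeL u v' h₁ =>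
        obtain ⟨q', hq'⟩ := ih p'.length (by omega) u p' rfl hp.of_cons hA.2
        refine ⟨Walk.cons h₁.symm q', ?_⟩
        rw [Walk.map_cons, Walk.cons_append, cons_eq_cons_iff]
        exact hq'

lemma sideR_decomp : ∀ (n : ℕ) (v : V₂) (p : (GG).Walk (R v) B), p.length = n → p.IsPath →
    A ∉ p.support →
    ∃ q : G₂.Walk v b₂,
      p = (q.map (homR G₁ a₁ b₁ m₁ G₂ a₂ b₂ m₂)).append (Walk.cons adj_RB Walk.nil) := by
  intro n
  induction n using Nat.strong_induction_on with
  | _ n ih =>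
  intro v p hn hp hA
  cases p with
  | @cons _ y _ h p' =>
    simp only [Walk.support_cons, List.mem_cons, not_or] at hA
    simp only [Walk.length_cons] at hn
    rcases adj_cases h with hr | hr
    · cases hr with
      | edgeR u v' h₁ =>
        obtain ⟨q', hq'⟩ := ih p'.length (by omega) v' p' rfl hp.of_cons hA.2
        refine ⟨Walk.cons h₁ q', ?_⟩
        rw [Walk.map_cons, Walk.cons_append, cons_eq_cons_iff]
        exact hq'
      | RB =>
        have hnil : p' = Walk.nil := isPath_closed hp.of_cons
        subst hnil
        exact ⟨Walk.nil, rfl⟩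
    · cases hr with
      | endR =>
        exact (padStuckR G₁ a₁ b₁ m₁ G₂ a₂ b₂ m₂ _ _ p' ⟨m₂ - 1, rfl⟩ rfl hA.2
          ((Walk.cons_isPath_iff _ _).mp hp).2).elim
      | edgeR u v' h₁ =>
        obtain ⟨q', hq'⟩ := ih p'.length (by omega) u p' rfl hp.of_cons hA.2
        refine ⟨Walk.cons h₁.symm q', ?_⟩
        rw [Walk.map_cons, Walk.cons_append, cons_eq_cons_iff]
        exact hq'

lemma padL_decomp : ∀ (n j k : ℕ) (hk : j + k + 1 = m₁) (p : (GG).Walk (PL j) B),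
    p.length = n → p.IsPath → A ∉ p.support →
    ∃ q : G₁.Walk a₁ b₁,
      p = (ascentL G₁ a₁ b₁ m₁ G₂ a₂ b₂ m₂ k j hk).append
        ((q.map (homL G₁ a₁ b₁ m₁ G₂ a₂ b₂ m₂)).append (Walk.cons adj_LB Walk.nil)) := by
  intro n
  induction n using Nat.strong_induction_on with
  | _ n ih =>
  intro j k hk p hn hp hA
  cases p with
  | @cons _ y _ h p' =>
    simp only [Walk.support_cons, List.mem_cons, not_or] at hA
    simp only [Walk.length_cons] at hn
    rcases adj_cases h with hr | hr
    · cases hr with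
      | stepL j hj =>
        obtain ⟨k', rfl⟩ : ∃ k', k = k' + 1 := ⟨k - 1, by omega⟩
        obtain ⟨q, hq⟩ := ih p'.length (by omega) (j + 1) k' (by omega) p' rfl
          hp.of_cons hA.2
        refine ⟨q, ?_⟩
        rw [show ascentL G₁ a₁ b₁ m₁ G₂ a₂ b₂ m₂ (k' + 1) j hk
              = Walk.cons (adj_PL_step (by omega))
                (ascentL G₁ a₁ b₁ m₁ G₂ a₂ b₂ m₂ k' (j + 1) (by omega)) from rfl,
          Walk.cons_append, cons_eq_cons_iff]
        exact hq
      | endL =>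
        have hk0 : k = 0 := by omega
        subst hk0
        obtain ⟨q, hq⟩ := sideL_decomp G₁ a₁ b₁ m₁ G₂ a₂ b₂ m₂ p'.length a₁ p' rfl
          hp.of_cons hA.2
        refine ⟨q, ?_⟩
        rw [show ascentL G₁ a₁ b₁ m₁ G₂ a₂ b₂ m₂ 0 (m₁ - 1) hk
              = Walk.cons adj_PL_end Walk.nil from rfl,
          Walk.cons_append, Walk.nil_append, cons_eq_cons_iff]
        exact hq
    · cases hr with
      | AL => exact (hA.2 (Walk.start_mem_support p')).elim
      | stepL j' hj' =>
        obtain ⟨q, hq⟩ := ih p'.length (by omega) j' (k + 1) (by omega) p' rfl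
          hp.of_cons hA.2
        exfalso
        have hmem : PL (j' + 1) ∈
            (ascentL G₁ a₁ b₁ m₁ G₂ a₂ b₂ m₂ (k + 1) j' (by omega)).support := by
          rw [ascentL_support]
          simp only [List.mem_append, List.mem_map]
          exact Or.inl ⟨j' + 1, by simp [List.mem_range'], rfl⟩
        have : PL (j' + 1) ∈ p'.support := by
          rw [hq, Walk.support_append]
          exact List.mem_append_left _ hmem
        exact ((Walk.cons_isPath_iff _ _).mp hp).2 this

lemma padR_decomp : ∀ (n j k : ℕ) (hk : j + k + 1 = m₂) (p : (GG).Walk (PR j) B),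
    p.length = n → p.IsPath → A ∉ p.support →
    ∃ q : G₂.Walk a₂ b₂,
      p = (ascentR G₁ a₁ b₁ m₁ G₂ a₂ b₂ m₂ k j hk).append
        ((q.map (homR G₁ a₁ b₁ m₁ G₂ a₂ b₂ m₂)).append (Walk.cons adj_RB Walk.nil)) := by
  intro n
  induction n using Nat.strong_induction_on with
  | _ n ih =>
  intro j k hk p hn hp hA
  cases p with
  | @cons _ y _ h p' =>
    simp only [Walk.support_cons, List.mem_cons, not_or] at hA
    simp only [Walk.length_cons] at hn
    rcases adj_cases h with hr | hr
    · cases hr with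
      | stepR j hj =>
        obtain ⟨k', rfl⟩ : ∃ k', k = k' + 1 := ⟨k - 1, by omega⟩
        obtain ⟨q, hq⟩ := ih p'.length (by omega) (j + 1) k' (by omega) p' rfl
          hp.of_cons hA.2
        refine ⟨q, ?_⟩
        rw [show ascentR G₁ a₁ b₁ m₁ G₂ a₂ b₂ m₂ (k' + 1) j hk
              = Walk.cons (adj_PR_step (by omega))
                (ascentR G₁ a₁ b₁ m₁ G₂ a₂ b₂ m₂ k' (j + 1) (by omega)) from rfl,
          Walk.cons_append, cons_eq_cons_iff]
        exact hq
      | endR =>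
        have hk0 : k = 0 := by omega
        subst hk0
        obtain ⟨q, hq⟩ := sideR_decomp G₁ a₁ b₁ m₁ G₂ a₂ b₂ m₂ p'.length a₂ p' rfl
          hp.of_cons hA.2
        refine ⟨q, ?_⟩
        rw [show ascentR G₁ a₁ b₁ m₁ G₂ a₂ b₂ m₂ 0 (m₂ - 1) hk
              = Walk.cons adj_PR_end Walk.nil from rfl,
          Walk.cons_append, Walk.nil_append, cons_eq_cons_iff]
        exact hq
    · cases hr with
      | AR => exact (hA.2 (Walk.start_mem_support p')).elim
      | stepR j' hj' =>
        obtain ⟨q, hq⟩ := ih p'.length (by omega) j' (k + 1) (by omega) p' rfl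
          hp.of_cons hA.2
        exfalso
        have hmem : PR (j' + 1) ∈
            (ascentR G₁ a₁ b₁ m₁ G₂ a₂ b₂ m₂ (k + 1) j' (by omega)).support := by
          rw [ascentR_support]
          simp only [List.mem_append, List.mem_map]
          exact Or.inl ⟨j' + 1, by simp [List.mem_range'], rfl⟩
        have : PR (j' + 1) ∈ p'.support := by
          rw [hq, Walk.support_append]
          exact List.mem_append_left _ hmem
        exact ((Walk.cons_isPath_iff _ _).mp hp).2 this

lemma decompAB (hm₁ : 0 < m₁) (hm₂ : 0 < m₂) (p : (GG).Walk A B) (hp : p.IsPath) :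
    (∃ q : G₁.Walk a₁ b₁, p = walkL G₁ a₁ b₁ m₁ G₂ a₂ b₂ m₂ hm₁ q) ∨
    (∃ q : G₂.Walk a₂ b₂, p = walkR G₁ a₁ b₁ m₁ G₂ a₂ b₂ m₂ hm₂ q) := by
  cases p with
  | @cons _ y _ h p' =>
    have hA : A ∉ p'.support := ((Walk.cons_isPath_iff _ _).mp hp).2
    rcases adj_cases h with hr | hr
    · cases hr with
      | AL =>
        obtain ⟨q, hq⟩ := padL_decomp G₁ a₁ b₁ m₁ G₂ a₂ b₂ m₂ p'.length 0 (m₁ - 1)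
          (by omega) p' rfl hp.of_cons hA
        refine Or.inl ⟨q, ?_⟩
        rw [walkL, cons_eq_cons_iff]
        exact hq
      | AR =>
        obtain ⟨q, hq⟩ := padR_decomp G₁ a₁ b₁ m₁ G₂ a₂ b₂ m₂ p'.length 0 (m₂ - 1)
          (by omega) p' rfl hp.of_cons hA
        refine Or.inr ⟨q, ?_⟩
        rw [walkR, cons_eq_cons_iff]
        exact hq
    · cases hr

lemma walkL_support_getElem_low (hm : 0 < m₁) (q : G₁.Walk a₁ b₁) {i : ℕ} (hi : i < m₁ + 1) :
    (walkL G₁ a₁ b₁ m₁ G₂ a₂ b₂ m₂ hm q).support[i]?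
      = (A :: (List.range' 0 m₁).map PL)[i]? := by
  rw [walkL_support, ← List.cons_append, List.getElem?_append_left (by simpa using hi)]

lemma walkL_support_getElem_high (hm : 0 < m₁) (q : G₁.Walk a₁ b₁) {i : ℕ} (hi : m₁ + 1 ≤ i) :
    (walkL G₁ a₁ b₁ m₁ G₂ a₂ b₂ m₂ hm q).support[i]?
      = (q.support.map L ++ [B])[i - (m₁ + 1)]? := by
  rw [walkL_support, ← List.cons_append, List.getElem?_append_right (by simpa using hi)]
  congr 2
  simp

lemma walkR_support_getElem_low (hm : 0 < m₂) (q : G₂.Walk a₂ b₂) {i : ℕ} (hi : i < m₂ + 1) :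
    (walkR G₁ a₁ b₁ m₁ G₂ a₂ b₂ m₂ hm q).support[i]?
      = (A :: (List.range' 0 m₂).map PR)[i]? := by
  rw [walkR_support, ← List.cons_append, List.getElem?_append_left (by simpa using hi)]

lemma walkR_support_getElem_high (hm : 0 < m₂) (q : G₂.Walk a₂ b₂) {i : ℕ} (hi : m₂ + 1 ≤ i) :
    (walkR G₁ a₁ b₁ m₁ G₂ a₂ b₂ m₂ hm q).support[i]?
      = (q.support.map R ++ [B])[i - (m₂ + 1)]? := by
  rw [walkR_support, ← List.cons_append, List.getElem?_append_right (by simpa using hi)]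
  congr 2
  simp

lemma suffix_ne_iff_L (s t : List V₁) (hlen : s.length = t.length) (j : ℕ) :
    ((s.map (L : V₁ → Pt V₁ V₂) ++ [B])[j]? ≠ (t.map L ++ [B])[j]?) ↔ s[j]? ≠ t[j]? := by
  rcases lt_trichotomy j s.length with hj | hj | hj
  · rw [List.getElem?_append_left (by simpa using hj),
      List.getElem?_append_left (by simp [← hlen, hj]),
      List.getElem?_map, List.getElem?_map]
    exact (Option.map_injective L_inj).ne_iff
  · rw [List.getElem?_append_right (by simp [hj]),
      List.getElem?_append_right (by simp [← hlen, hj])]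
    have h1 : j - (s.map (L : _ → Pt V₁ V₂)).length = 0 := by simp [hj]
    have h2 : j - (t.map (L : _ → Pt V₁ V₂)).length = 0 := by simp [hj, ← hlen]
    rw [h1, h2, List.getElem?_eq_none (l := s) (le_of_eq hj.symm),
      List.getElem?_eq_none (l := t) (by omega)]
    simp
  · rw [List.getElem?_eq_none (l := s ) (by omega),
      List.getElem?_eq_none (l := s.map (L : V₁ → Pt V₁ V₂) ++ [B]) (by simp; omega),
      List.getElem?_eq_none (l := t) (by omega),
      List.getElem?_eq_none (l := t.map (L : V₁ → Pt V₁ V₂) ++ [B]) (by simp; omega)]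
    simp

lemma suffix_ne_iff_R (s t : List V₂) (hlen : s.length = t.length) (j : ℕ) :
    ((s.map (R : V₂ → Pt V₁ V₂) ++ [B])[j]? ≠ (t.map R ++ [B])[j]?) ↔ s[j]? ≠ t[j]? := by
  rcases lt_trichotomy j s.length with hj | hj | hj
  · rw [List.getElem?_append_left (by simpa using hj),
      List.getElem?_append_left (by simp [← hlen, hj]),
      List.getElem?_map, List.getElem?_map]
    exact (Option.map_injective R_inj).ne_iff
  · rw [List.getElem?_append_right (by simp [hj]),
      List.getElem?_append_right (by simp [← hlen, hj])]
    have h1 : j - (s.map (R : _ → Pt V₁ V₂)).length = 0 := by simp [hj]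
    have h2 : j - (t.map (R : _ → Pt V₁ V₂)).length = 0 := by simp [hj, ← hlen]
    rw [h1, h2, List.getElem?_eq_none (l := s) (le_of_eq hj.symm),
      List.getElem?_eq_none (l := t) (by omega)]
    simp
  · rw [List.getElem?_eq_none (l := s ) (by omega),
      List.getElem?_eq_none (l := s.map (R : V₂ → Pt V₁ V₂) ++ [B]) (by simp; omega),
      List.getElem?_eq_none (l := t) (by omega),
      List.getElem?_eq_none (l := t.map (R : V₂ → Pt V₁ V₂) ++ [B]) (by simp; omega)]
    simp

lemma diff_mem_L (hm : 0 < m₁) (u w : G₁.Walk a₁ b₁) (hlen : u.length = w.length) (i : ℕ) :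
    ((walkL G₁ a₁ b₁ m₁ G₂ a₂ b₂ m₂ hm u).support[i]?
        ≠ (walkL G₁ a₁ b₁ m₁ G₂ a₂ b₂ m₂ hm w).support[i]?)
      ↔ (m₁ + 1 ≤ i ∧ u.support[i - (m₁ + 1)]? ≠ w.support[i - (m₁ + 1)]?) := by
  by_cases hi : i < m₁ + 1
  · rw [walkL_support_getElem_low G₁ a₁ b₁ m₁ G₂ a₂ b₂ m₂ hm u hi,
      walkL_support_getElem_low G₁ a₁ b₁ m₁ G₂ a₂ b₂ m₂ hm w hi]
    simp only [ne_eq, not_true_eq_false, false_iff, not_and]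
    omega
  · rw [walkL_support_getElem_high G₁ a₁ b₁ m₁ G₂ a₂ b₂ m₂ hm u (by omega),
      walkL_support_getElem_high G₁ a₁ b₁ m₁ G₂ a₂ b₂ m₂ hm w (by omega),
      suffix_ne_iff_L u.support w.support (by simp [Walk.length_support, hlen])]
    simp only [iff_and_self]
    intro _
    omega

lemma diff_mem_R (hm : 0 < m₂) (u w : G₂.Walk a₂ b₂) (hlen : u.length = w.length) (i : ℕ) :
    ((walkR G₁ a₁ b₁ m₁ G₂ a₂ b₂ m₂ hm u).support[i]?
        ≠ (walkR G₁ a₁ b₁ m₁ G₂ a₂ b₂ m₂ hm w).support[i]?)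
      ↔ (m₂ + 1 ≤ i ∧ u.support[i - (m₂ + 1)]? ≠ w.support[i - (m₂ + 1)]?) := by
  by_cases hi : i < m₂ + 1
  · rw [walkR_support_getElem_low G₁ a₁ b₁ m₁ G₂ a₂ b₂ m₂ hm u hi,
      walkR_support_getElem_low G₁ a₁ b₁ m₁ G₂ a₂ b₂ m₂ hm w hi]
    simp only [ne_eq, not_true_eq_false, false_iff, not_and]
    omega
  · rw [walkR_support_getElem_high G₁ a₁ b₁ m₁ G₂ a₂ b₂ m₂ hm u (by omega),
      walkR_support_getElem_high G₁ a₁ b₁ m₁ G₂ a₂ b₂ m₂ hm w (by omega),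
      suffix_ne_iff_R u.support w.support (by simp [Walk.length_support, hlen])]
    simp only [iff_and_self]
    intro _
    omega

lemma exu_L (hm : 0 < m₁) (u w : G₁.Walk a₁ b₁) (hlen : u.length = w.length) :
    (∃! i : ℕ, (walkL G₁ a₁ b₁ m₁ G₂ a₂ b₂ m₂ hm u).support[i]?
        ≠ (walkL G₁ a₁ b₁ m₁ G₂ a₂ b₂ m₂ hm w).support[i]?)
      ↔ (∃! i : ℕ, u.support[i]? ≠ w.support[i]?) := by
  constructor
  · rintro ⟨i, hi, hun⟩
    obtain ⟨hle, hne⟩ := (diff_mem_L G₁ a₁ b₁ m₁ G₂ a₂ b₂ m₂ hm u w hlen i).mp hi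
    refine ⟨i - (m₁ + 1), hne, ?_⟩
    intro j hj
    have hj2 := hun (j + (m₁ + 1))
      ((diff_mem_L G₁ a₁ b₁ m₁ G₂ a₂ b₂ m₂ hm u w hlen _).mpr ⟨by omega, by simpa⟩)
    omega
  · rintro ⟨j, hj, hun⟩
    refine ⟨j + (m₁ + 1),
      (diff_mem_L G₁ a₁ b₁ m₁ G₂ a₂ b₂ m₂ hm u w hlen _).mpr ⟨by omega, by simpa⟩, ?_⟩
    intro i hi
    obtain ⟨hle, hne⟩ := (diff_mem_L G₁ a₁ b₁ m₁ G₂ a₂ b₂ m₂ hm u w hlen i).mp hi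
    have := hun _ hne
    omega

lemma exu_R (hm : 0 < m₂) (u w : G₂.Walk a₂ b₂) (hlen : u.length = w.length) :
    (∃! i : ℕ, (walkR G₁ a₁ b₁ m₁ G₂ a₂ b₂ m₂ hm u).support[i]?
        ≠ (walkR G₁ a₁ b₁ m₁ G₂ a₂ b₂ m₂ hm w).support[i]?)
      ↔ (∃! i : ℕ, u.support[i]? ≠ w.support[i]?) := by
  constructor
  · rintro ⟨i, hi, hun⟩
    obtain ⟨hle, hne⟩ := (diff_mem_R G₁ a₁ b₁ m₁ G₂ a₂ b₂ m₂ hm u w hlen i).mp hi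
    refine ⟨i - (m₂ + 1), hne, ?_⟩
    intro j hj
    have hj2 := hun (j + (m₂ + 1))
      ((diff_mem_R G₁ a₁ b₁ m₁ G₂ a₂ b₂ m₂ hm u w hlen _).mpr ⟨by omega, by simpa⟩)
    omega
  · rintro ⟨j, hj, hun⟩
    refine ⟨j + (m₂ + 1),
      (diff_mem_R G₁ a₁ b₁ m₁ G₂ a₂ b₂ m₂ hm u w hlen _).mpr ⟨by omega, by simpa⟩, ?_⟩
    intro i hi
    obtain ⟨hle, hne⟩ := (diff_mem_R G₁ a₁ b₁ m₁ G₂ a₂ b₂ m₂ hm u w hlen i).mp hi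
    have := hun _ hne
    omega

lemma walkL_support_one_two (hm : 0 < m₁) (hm2 : 2 ≤ m₁) (q : G₁.Walk a₁ b₁) :
    (walkL G₁ a₁ b₁ m₁ G₂ a₂ b₂ m₂ hm q).support[1]? = some (PL 0)
      ∧ (walkL G₁ a₁ b₁ m₁ G₂ a₂ b₂ m₂ hm q).support[2]? = some (PL 1) := by
  obtain ⟨k, rfl⟩ : ∃ k, m₁ = k + 2 := ⟨m₁ - 2, by omega⟩
  rw [walkL_support_getElem_low G₁ a₁ b₁ _ G₂ a₂ b₂ m₂ hm q (by omega),
    walkL_support_getElem_low G₁ a₁ b₁ _ G₂ a₂ b₂ m₂ hm q (by omega)]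
  simp [List.range'_succ]

lemma walkR_support_one_two (hm : 0 < m₂) (hm2 : 2 ≤ m₂) (q : G₂.Walk a₂ b₂) :
    (walkR G₁ a₁ b₁ m₁ G₂ a₂ b₂ m₂ hm q).support[1]? = some (PR 0)
      ∧ (walkR G₁ a₁ b₁ m₁ G₂ a₂ b₂ m₂ hm q).support[2]? = some (PR 1) := by
  obtain ⟨k, rfl⟩ : ∃ k, m₂ = k + 2 := ⟨m₂ - 2, by omega⟩
  rw [walkR_support_getElem_low G₁ a₁ b₁ m₁ G₂ a₂ b₂ _ hm q (by omega),
    walkR_support_getElem_low G₁ a₁ b₁ m₁ G₂ a₂ b₂ _ hm q (by omega)]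
  simp [List.range'_succ]

lemma not_exu_LR (hm₁ : 0 < m₁) (hm₂ : 0 < m₂) (h2₁ : 2 ≤ m₁) (h2₂ : 2 ≤ m₂)
    (u : G₁.Walk a₁ b₁) (w : G₂.Walk a₂ b₂) :
    ¬ (∃! i : ℕ, (walkL G₁ a₁ b₁ m₁ G₂ a₂ b₂ m₂ hm₁ u).support[i]?
        ≠ (walkR G₁ a₁ b₁ m₁ G₂ a₂ b₂ m₂ hm₂ w).support[i]?) := by
  obtain ⟨hL1, hL2⟩ := walkL_support_one_two G₁ a₁ b₁ m₁ G₂ a₂ b₂ m₂ hm₁ h2₁ u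
  obtain ⟨hR1, hR2⟩ := walkR_support_one_two G₁ a₁ b₁ m₁ G₂ a₂ b₂ m₂ hm₂ h2₂ w
  rintro ⟨i, hi, hun⟩
  have e1 := hun 1 (by show _ ≠ _; rw [hL1, hR1]; simp)
  have e2 := hun 2 (by show _ ≠ _; rw [hL2, hR2]; simp)
  omega

end

end Pt
end S9

open S9 S9.Pt

/-- the disjoint union of two shortest path graphs is a shortest path graph. -/
theorem stmt_9 {V₁ V₂ : Type u} (G₁ : SimpleGraph V₁) (a₁ b₁ : V₁) (h₁ : a₁ ≠ b₁)
    (G₂ : SimpleGraph V₂) (a₂ b₂ : V₂) (h₂ : a₂ ≠ b₂) :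
    ∃ (W : Type u) (G : SimpleGraph W) (a b : W), a ≠ b ∧
      Nonempty (SPG G a b ≃g (SPG G₁ a₁ b₁ ⊕g SPG G₂ a₂ b₂)) := by
  classical
  by_cases hr : G₁.Reachable a₁ b₁ ∨ G₂.Reachable a₂ b₂
  · -- at least one side has geodesics
    obtain ⟨D₁, hD₁⟩ : ∃ D, D = if G₁.Reachable a₁ b₁ then G₁.dist a₁ b₁ else 1 := ⟨_, rfl⟩
    obtain ⟨D₂, hD₂⟩ : ∃ D, D = if G₂.Reachable a₂ b₂ then G₂.dist a₂ b₂ else 1 := ⟨_, rfl⟩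
    have hD₁pos : 1 ≤ D₁ := by
      rw [hD₁]; split_ifs with h
      · exact h.pos_dist_of_ne h₁
      · exact le_refl 1
    have hD₂pos : 1 ≤ D₂ := by
      rw [hD₂]; split_ifs with h
      · exact h.pos_dist_of_ne h₂
      · exact le_refl 1
    obtain ⟨M, hM⟩ : ∃ M, M = max D₁ D₂ := ⟨_, rfl⟩
    obtain ⟨m₁, hm₁e⟩ : ∃ m, m = M + 2 - D₁ := ⟨_, rfl⟩
    obtain ⟨m₂, hm₂e⟩ : ∃ m, m = M + 2 - D₂ := ⟨_, rfl⟩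
    obtain ⟨N, hN⟩ : ∃ N, N = M + 4 := ⟨_, rfl⟩
    have hD₁M : D₁ ≤ M := hM ▸ le_max_left _ _
    have hD₂M : D₂ ≤ M := hM ▸ le_max_right _ _
    have hm₁ : 0 < m₁ := by omega
    have hm₂ : 0 < m₂ := by omega
    have h2₁ : 2 ≤ m₁ := by omega
    have h2₂ : 2 ≤ m₂ := by omega
    have hN₁ : G₁.Reachable a₁ b₁ → m₁ + G₁.dist a₁ b₁ + 2 = N := by
      intro h; rw [hD₁, if_pos h] at *; omega
    have hN₂ : G₂.Reachable a₂ b₂ → m₂ + G₂.dist a₂ b₂ + 2 = N := by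
      intro h; rw [hD₂, if_pos h] at *; omega
    set GG := Gr G₁ a₁ b₁ m₁ G₂ a₂ b₂ m₂ with hGG
    -- every A-B path has length at least N
    have hlb : ∀ p : GG.Walk A B, p.IsPath → N ≤ p.length := by
      intro p hp
      rcases decompAB G₁ a₁ b₁ m₁ G₂ a₂ b₂ m₂ hm₁ hm₂ p hp with ⟨q, rfl⟩ | ⟨q, rfl⟩
      · rw [walkL_length]
        have h3 := G₁.dist_le q
        have h4 := hN₁ ⟨q⟩
        omega
      · rw [walkR_length]
        have h3 := G₂.dist_le q
        have h4 := hN₂ ⟨q⟩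
        omega
    have hlbw : ∀ p : GG.Walk A B, N ≤ p.length := fun p =>
      le_trans (hlb p.bypass p.bypass_isPath) p.length_bypass_le
    -- there is a walk of length exactly N
    have hex : ∃ w : GG.Walk A B, w.IsPath ∧ w.length = N := by
      rcases hr with h | h
      · obtain ⟨q0, hq0p, hq0l⟩ := h.exists_path_of_dist
        exact ⟨walkL G₁ a₁ b₁ m₁ G₂ a₂ b₂ m₂ hm₁ q0,
          walkL_isPath G₁ a₁ b₁ m₁ G₂ a₂ b₂ m₂ hm₁ q0 hq0p,
          by rw [walkL_length, hq0l]; exact hN₁ h⟩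
      · obtain ⟨q0, hq0p, hq0l⟩ := h.exists_path_of_dist
        exact ⟨walkR G₁ a₁ b₁ m₁ G₂ a₂ b₂ m₂ hm₂ q0,
          walkR_isPath G₁ a₁ b₁ m₁ G₂ a₂ b₂ m₂ hm₂ q0 hq0p,
          by rw [walkR_length, hq0l]; exact hN₂ h⟩
    obtain ⟨w0, hw0p, hw0l⟩ := hex
    have hreachAB : GG.Reachable A B := ⟨w0⟩
    have hdist : GG.dist A B = N := by
      refine le_antisymm (hw0l ▸ GG.dist_le w0) ?_
      obtain ⟨p0, _, hp0l⟩ := hreachAB.exists_path_of_dist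
      exact hp0l ▸ hlbw p0
    -- the bijection between geodesics
    have memL : ∀ u : Geodesic G₁ a₁ b₁,
        (walkL G₁ a₁ b₁ m₁ G₂ a₂ b₂ m₂ hm₁ u.1).IsPath ∧
        (walkL G₁ a₁ b₁ m₁ G₂ a₂ b₂ m₂ hm₁ u.1).length = GG.dist A B := fun u =>
      ⟨walkL_isPath G₁ a₁ b₁ m₁ G₂ a₂ b₂ m₂ hm₁ u.1 u.2.1,
        by rw [walkL_length, hdist, u.2.2]; exact hN₁ ⟨u.1⟩⟩
    have memR : ∀ u : Geodesic G₂ a₂ b₂,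
        (walkR G₁ a₁ b₁ m₁ G₂ a₂ b₂ m₂ hm₂ u.1).IsPath ∧
        (walkR G₁ a₁ b₁ m₁ G₂ a₂ b₂ m₂ hm₂ u.1).length = GG.dist A B := fun u =>
      ⟨walkR_isPath G₁ a₁ b₁ m₁ G₂ a₂ b₂ m₂ hm₂ u.1 u.2.1,
        by rw [walkR_length, hdist, u.2.2]; exact hN₂ ⟨u.1⟩⟩
    let F : Geodesic G₁ a₁ b₁ ⊕ Geodesic G₂ a₂ b₂ → Geodesic GG A B := fun x =>
      match x with
      | Sum.inl u => ⟨walkL G₁ a₁ b₁ m₁ G₂ a₂ b₂ m₂ hm₁ u.1, memL u⟩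
      | Sum.inr u => ⟨walkR G₁ a₁ b₁ m₁ G₂ a₂ b₂ m₂ hm₂ u.1, memR u⟩
    have hFinj : Function.Injective F := by
      rintro (u | u) (w | w) h
      · exact congrArg Sum.inl (Subtype.ext
          (walkL_inj G₁ a₁ b₁ m₁ G₂ a₂ b₂ m₂ hm₁ (congrArg Subtype.val h)))
      · exact absurd (congrArg Subtype.val h)
          (walkL_ne_walkR G₁ a₁ b₁ m₁ G₂ a₂ b₂ m₂ hm₁ hm₂ u.1 w.1)
      · exact absurd (congrArg Subtype.val h).symm
          (walkL_ne_walkR G₁ a₁ b₁ m₁ G₂ a₂ b₂ m₂ hm₁ hm₂ w.1 u.1)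
      · exact congrArg Sum.inr (Subtype.ext
          (walkR_inj G₁ a₁ b₁ m₁ G₂ a₂ b₂ m₂ hm₂ (congrArg Subtype.val h)))
    have hFsurj : Function.Surjective F := by
      rintro ⟨p, hp, hl⟩
      rcases decompAB G₁ a₁ b₁ m₁ G₂ a₂ b₂ m₂ hm₁ hm₂ p hp with ⟨q, rfl⟩ | ⟨q, rfl⟩
      · have hqp : q.IsPath := walkL_isPath_rev G₁ a₁ b₁ m₁ G₂ a₂ b₂ m₂ hm₁ q hp
        have hql : q.length = G₁.dist a₁ b₁ := by
          rw [walkL_length, hdist] at hl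
          have := hN₁ ⟨q⟩
          omega
        exact ⟨Sum.inl ⟨q, hqp, hql⟩, rfl⟩
      · have hqp : q.IsPath := walkR_isPath_rev G₁ a₁ b₁ m₁ G₂ a₂ b₂ m₂ hm₂ q hp
        have hql : q.length = G₂.dist a₂ b₂ := by
          rw [walkR_length, hdist] at hl
          have := hN₂ ⟨q⟩
          omega
        exact ⟨Sum.inr ⟨q, hqp, hql⟩, rfl⟩
    have hsuppl₁ : ∀ u w : Geodesic G₁ a₁ b₁, u.1.length = w.1.length := by
      intro u w; rw [u.2.2, w.2.2]
    have hsuppl₂ : ∀ u w : Geodesic G₂ a₂ b₂, u.1.length = w.1.length := by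
      intro u w; rw [u.2.2, w.2.2]
    have iso : (SPG G₁ a₁ b₁ ⊕g SPG G₂ a₂ b₂) ≃g SPG GG A B := by
      refine ⟨Equiv.ofBijective F ⟨hFinj, hFsurj⟩, ?_⟩
      rintro (u | u) (w | w)
      · exact exu_L G₁ a₁ b₁ m₁ G₂ a₂ b₂ m₂ hm₁ u.1 w.1 (hsuppl₁ u w)
      · exact iff_of_false
          (not_exu_LR G₁ a₁ b₁ m₁ G₂ a₂ b₂ m₂ hm₁ hm₂ h2₁ h2₂ u.1 w.1) (by simp)
      · exact iff_of_false
          (fun h => not_exu_LR G₁ a₁ b₁ m₁ G₂ a₂ b₂ m₂ hm₁ hm₂ h2₁ h2₂ w.1 u.1 h.symm)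
          (by simp)
      · exact exu_R G₁ a₁ b₁ m₁ G₂ a₂ b₂ m₂ hm₂ u.1 w.1 (hsuppl₂ u w)
    refine ⟨Pt V₁ V₂, GG, A, B, ?_, ⟨iso.symm⟩⟩
    intro h
    cases h
  · -- no geodesics at all
    push_neg at hr
    obtain ⟨hr₁, hr₂⟩ := hr
    have hE : IsEmpty (Geodesic (Gr G₁ a₁ b₁ 1 G₂ a₂ b₂ 1) A B) := ⟨fun g => by
      rcases decompAB G₁ a₁ b₁ 1 G₂ a₂ b₂ 1 one_pos one_pos g.1 g.2.1 with ⟨q, _⟩ | ⟨q, _⟩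
      exacts [hr₁ ⟨q⟩, hr₂ ⟨q⟩]⟩
    have hE₁ : IsEmpty (Geodesic G₁ a₁ b₁) := ⟨fun g => hr₁ ⟨g.1⟩⟩
    have hE₂ : IsEmpty (Geodesic G₂ a₂ b₂) := ⟨fun g => hr₂ ⟨g.1⟩⟩
    refine ⟨Pt V₁ V₂, Gr G₁ a₁ b₁ 1 G₂ a₂ b₂ 1, A, B, ?_,
      ⟨⟨Equiv.equivOfIsEmpty _ _, fun {a b} => isEmptyElim a⟩⟩⟩
    intro h
    cases h
end

section
/- If H = S(G,a,b) is a shortest path graph with d_G(a,b) = n, then for every n' ≥ n there exists a graph G' with vertices a, b' such that d_{G'}(a,b') = n' and S(G',a,b') is isomorphic to H. -/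
open SimpleGraph

variable {V : Type*}

section Ext

variable (G : SimpleGraph V) (b : V)

/-- `G` with one extra vertex `none` attached to `b`. -/
def ext : SimpleGraph (Option V) where
  Adj x y := (∃ u v, x = some u ∧ y = some v ∧ G.Adj u v) ∨
    (x = some b ∧ y = none) ∨ (x = none ∧ y = some b)
  symm := by
    constructor
    rintro x y (⟨u, v, rfl, rfl, h⟩ | ⟨rfl, rfl⟩ | ⟨rfl, rfl⟩)
    · exact Or.inl ⟨v, u, rfl, rfl, h.symm⟩
    · exact Or.inr (Or.inr ⟨rfl, rfl⟩)
    · exact Or.inr (Or.inl ⟨rfl, rfl⟩)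
  loopless := by
    constructor
    rintro x (⟨u, v, rfl, h, huv⟩ | ⟨rfl, h⟩ | ⟨h, rfl⟩)
    · exact (G.loopless.irrefl u (by cases h; exact huv))
    · exact Option.some_ne_none _ h
    · exact Option.some_ne_none _ h

variable {G b}

lemma ext_adj_some_some {u v : V} : (ext G b).Adj (some u) (some v) ↔ G.Adj u v := by
  constructor
  · rintro (⟨u', v', hu, hv, h⟩ | ⟨h, h'⟩ | ⟨h, h'⟩)
    · cases hu; cases hv; exact h
    · exact absurd h' (Option.some_ne_none _)
    · exact absurd h (Option.some_ne_none _)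
  · exact fun h => Or.inl ⟨u, v, rfl, rfl, h⟩

lemma ext_adj_none {x : Option V} (h : (ext G b).Adj none x) : x = some b := by
  rcases h with ⟨u, v, hu, hv, h⟩ | ⟨h, h'⟩ | ⟨h, h'⟩
  · exact absurd hu.symm (Option.some_ne_none _)
  · exact absurd h.symm (Option.some_ne_none _)
  · exact h'

/-- The embedding of `G` into `ext G b`. -/
def homExt : G →g ext G b := ⟨some, fun h => Or.inl ⟨_, _, rfl, rfl, h⟩⟩

attribute [reducible] homExt

lemma homExt_injective : Function.Injective (homExt (G := G) (b := b) : V → Option V) :=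
  Option.some_injective V

/-- Lift a walk avoiding `none` back to `G`. -/
lemma lift_walk : ∀ {x y : Option V} (p : (ext G b).Walk x y),
    (∀ z ∈ p.support, z ≠ none) → ∀ {u v : V} (hx : x = some u) (hy : y = some v),
    ∃ q : G.Walk u v, q.map homExt = p.copy hx hy := by
  intro x y p
  induction p with
  | nil =>
    rintro _ u v rfl h
    cases h
    exact ⟨Walk.nil, rfl⟩
  | @cons x x₁ y hadj p ih =>
    rintro hnone u v rfl rfl
    obtain ⟨w, rfl⟩ : ∃ w, x₁ = some w := by
      cases x₁ with
      | none => exact absurd rfl (hnone none (by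
          simp only [Walk.support_cons, List.mem_cons]
          exact Or.inr p.start_mem_support))
      | some w => exact ⟨w, rfl⟩
    obtain ⟨q, hq⟩ := ih (fun z hz => hnone z (by simp [hz])) rfl rfl
    exact ⟨Walk.cons (ext_adj_some_some.mp hadj) q, by simp [hq]⟩

/-- A path in `ext G b` between `some` vertices avoids `none`. -/
lemma path_avoids_none : ∀ {x y : Option V} (p : (ext G b).Walk x y), p.IsPath →
    x ≠ none → y ≠ none → ∀ z ∈ p.support, z ≠ none := by
  intro x y p
  induction p with
  | nil => intro _ hx _ z hz; simp at hz; subst hz; exact hx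
  | @cons x x₁ y hadj p ih =>
    intro hp hx hy z hz
    rcases hx1 : x₁ with _ | w
    · -- x₁ = none : then x = some b and p starts at none whose next is some b, contradiction
      subst hx1
      exfalso
      have hxb : x = some b := by
        have := (ext G b).adj_symm hadj
        exact ext_adj_none this
      -- p : Walk none y, y ≠ none so p is cons
      obtain ⟨x₂, h₂, p₂, rfl⟩ := Walk.exists_eq_cons_of_ne (fun h => hy h.symm) p
      have hx₂ : x₂ = some b := ext_adj_none h₂
      subst hxb hx₂
      have := hp.support_nodup
      simp [Walk.support_cons] at this
    · simp only [Walk.support_cons, List.mem_cons] at hz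
      rcases hz with rfl | hz
      · exact hx
      · exact ih hp.of_cons (by simp [hx1]) hy z hz

/-- Any walk in `ext G b` between `some` vertices is at least as long as the distance in `G`. -/
lemma dist_le_walk_ext {u v : V} (p : (ext G b).Walk (some u) (some v)) :
    G.dist u v ≤ p.length := by
  classical
  have hpath := Walk.bypass_isPath p
  have havoid := path_avoids_none p.bypass hpath (Option.some_ne_none u) (Option.some_ne_none v)
  obtain ⟨q, hq⟩ := lift_walk p.bypass havoid rfl rfl
  have : q.length = p.bypass.length := by
    have := congrArg Walk.length hq
    simp at this; exact this
  calc G.dist u v ≤ q.length := dist_le q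
    _ = p.bypass.length := this
    _ ≤ p.length := Walk.length_bypass_le p

variable (a : V) (hr : G.Reachable a b)

lemma hedge : (ext G b).Adj (some b) none := Or.inr (Or.inl ⟨rfl, rfl⟩)

/-- Walk from `some a` to `none`. -/
lemma ext_reachable (hr : G.Reachable a b) : (ext G b).Reachable (some a) none := by
  obtain ⟨p⟩ := hr
  exact ⟨(p.map homExt).concat (hedge)⟩

lemma ext_dist (hr : G.Reachable a b) : (ext G b).dist (some a) none = G.dist a b + 1 := by
  obtain ⟨p, hp⟩ := hr.exists_walk_length_eq_dist
  apply le_antisymm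
  · have := dist_le ((p.map homExt).concat hedge)
    simp [Walk.length_concat, hp] at this; exact this
  · -- lower bound
    obtain ⟨P, hP⟩ := (ext_reachable a hr).exists_walk_length_eq_dist
    rw [← hP]
    -- P : Walk (some a) none
    obtain ⟨x, hx, q, hq⟩ := Walk.exists_eq_cons_of_ne
      (fun h => Option.some_ne_none a h.symm) P.reverse
    have hxb : x = some b := ext_adj_none hx
    subst hxb
    have hlen : P.length = q.length + 1 := by
      have := congrArg Walk.length hq
      simpa [Nat.add_comm] using this
    have := dist_le_walk_ext q
    rw [hlen, SimpleGraph.dist_comm]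
    omega

end Ext

section Geod

lemma concat_getElem?_iff {α : Type*} {s t : List α} (x : α) (hlen : s.length = t.length)
    (i : ℕ) : (s ++ [x])[i]? = (t ++ [x])[i]? ↔ s[i]? = t[i]? := by
  rcases lt_or_ge i s.length with h | h
  · rw [List.getElem?_append_left h, List.getElem?_append_left (hlen ▸ h)]
  · rw [List.getElem?_append_right h, List.getElem?_append_right (hlen ▸ h), hlen,
      List.getElem?_eq_none h, List.getElem?_eq_none (hlen ▸ h : t.length ≤ i)]
    simp

variable {G : SimpleGraph V} {a b : V}

lemma homExt_coe : ⇑(homExt (G := G) (b := b)) = some := rfl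

/-- The forward map on geodesics. -/
def fwd (hr : G.Reachable a b) (p : Geodesic G a b) :
    Geodesic (ext G b) (some a) none :=
  ⟨(p.1.map (homExt (b := b))).concat hedge, by
    have h1 : (p.1.map (homExt (b := b))).IsPath :=
      Walk.map_isPath_of_injective homExt_injective p.2.1
    rw [Walk.isPath_def, Walk.support_concat, List.nodup_append]
    refine ⟨h1.support_nodup, List.nodup_singleton _, ?_⟩
    intro z hz w hz' hzw
    simp only [List.mem_singleton] at hz'
    subst hz' hzw
    rw [Walk.support_map, homExt_coe] at hz
    simp at hz, by
    rw [Walk.length_concat, Walk.length_map, p.2.2, ext_dist a hr]⟩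

lemma fwd_injective (hr : G.Reachable a b) : Function.Injective (fwd hr) := by
  intro U W h
  have hval := congrArg Subtype.val h
  simp only [fwd] at hval
  obtain ⟨hv, hcopy⟩ := Walk.concat_inj hval
  rw [Walk.copy_rfl_rfl] at hcopy
  exact Subtype.ext (Walk.map_injective_of_injective homExt_injective _ _ hcopy)

lemma fwd_surjective (hr : G.Reachable a b) : Function.Surjective (fwd hr) := by
  intro P
  obtain ⟨x, hx, q, hq⟩ := Walk.exists_eq_cons_of_ne
    (fun h => Option.some_ne_none a h.symm) P.1.reverse
  have hxb : x = some b := ext_adj_none hx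
  subst hxb
  have hPval : P.1 = q.reverse.concat hx.symm := by
    have := congrArg Walk.reverse hq
    rwa [Walk.reverse_reverse, Walk.reverse_cons] at this
  -- q.reverse avoids none
  have hnodup : P.1.support.Nodup := P.2.1.support_nodup
  rw [hPval, Walk.support_concat, List.nodup_append] at hnodup
  have havoid : ∀ z ∈ q.reverse.support, z ≠ none := by
    rintro z hz rfl
    exact hnodup.2.2 none hz none (List.mem_singleton_self _) rfl
  obtain ⟨p₀, hp₀⟩ := lift_walk q.reverse havoid rfl rfl
  rw [Walk.copy_rfl_rfl] at hp₀
  have hp₀path : p₀.IsPath := by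
    apply Walk.IsPath.of_map (f := homExt)
    rw [hp₀, Walk.isPath_def]
    exact hnodup.1
  have hlenP : P.1.length = q.length + 1 := by
    have := congrArg Walk.length hq
    simpa [Nat.add_comm] using this
  have hp₀len : p₀.length = G.dist a b := by
    have h1 : p₀.length = q.reverse.length := by
      have := congrArg Walk.length hp₀
      simpa using this
    have h2 := P.2.2
    have h3 := ext_dist a hr
    have h4 : q.length + 1 = G.dist a b + 1 := by rw [← hlenP, h2, h3]
    rw [h1, Walk.length_reverse, Nat.succ_injective h4]
  refine ⟨⟨p₀, hp₀path, hp₀len⟩, ?_⟩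
  apply Subtype.ext
  show (p₀.map homExt).concat hedge = P.1
  rw [hPval, hp₀]

lemma diff_fwd (hr : G.Reachable a b) (U W : Geodesic G a b) :
    diffIndices (ext G b) (some a) none (fwd hr U) (fwd hr W) = diffIndices G a b U W := by
  ext i
  simp only [diffIndices, Set.mem_setOf_eq, fwd, Walk.support_concat, Walk.support_map,
    homExt_coe, List.concat_eq_append]
  rw [not_iff_not]
  rw [concat_getElem?_iff _ (by
    simp only [List.length_map, Walk.length_support, U.2.2, W.2.2])]
  rw [List.getElem?_map, List.getElem?_map]
  exact (Option.map_injective (Option.some_injective V)).eq_iff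

/-- The shortest path graphs are isomorphic. -/
noncomputable def spgIso (hr : G.Reachable a b) :
    SPG (ext G b) (some a) none ≃g SPG G a b := by
  refine ((RelIso.mk (Equiv.ofBijective (fwd hr) ⟨fwd_injective hr, fwd_surjective hr⟩) ?_)).symm
  intro U W
  show (SPG (ext G b) (some a) none).Adj (fwd hr U) (fwd hr W) ↔ (SPG G a b).Adj U W
  simp only [SPG, diff_fwd hr]

end Geod

lemma main_aux {V : Type u} (G : SimpleGraph V) (a b : V) (hr : G.Reachable a b) (k : ℕ) :
    ∃ (W : Type u) (G' : SimpleGraph W) (a' b' : W),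
      G'.Reachable a' b' ∧ G'.dist a' b' = G.dist a b + k ∧
      Nonempty (SPG G' a' b' ≃g SPG G a b) := by
  induction k with
  | zero => exact ⟨V, G, a, b, hr, rfl, ⟨Iso.refl (G := SPG G a b)⟩⟩
  | succ k ih =>
    obtain ⟨W, G', a', b', hr', hd', ⟨iso⟩⟩ := ih
    exact ⟨Option W, ext G' b', some a', none, ext_reachable a' hr',
      by rw [ext_dist a' hr', hd']; omega, ⟨(spgIso hr').trans iso⟩⟩

/-- the distance between the base vertices can be made arbitrarily larger. -/
theorem stmt_10 {V : Type u} (G : SimpleGraph V) (a b : V) (hab : a ≠ b)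
    (hr : G.Reachable a b) (n n' : ℕ) (hn : G.dist a b = n) (hle : n ≤ n') :
    ∃ (W : Type u) (G' : SimpleGraph W) (a' b' : W),
      G'.Reachable a' b' ∧ G'.dist a' b' = n' ∧
      Nonempty (SPG G' a' b' ≃g SPG G a b) := by
  obtain ⟨W, G', a', b', hr', hd', hiso⟩ := main_aux G a b hr (n' - n)
  exact ⟨W, G', a', b', hr', by rw [hd', hn]; omega, hiso⟩
end

section
/- The claw K_{1,3} is not a shortest path graph: there is no graph G with distinct vertices a,b such that S(G,a,b) is isomorphic to K_{1,3}. -/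
open SimpleGraph

variable {V : Type*}

namespace ClawAux

variable {G : SimpleGraph V}

/-- `support[n]?` is `getVert n` for valid indices. -/
lemma support_getElem?_eq {u v : V} (p : G.Walk u v) : ∀ {n : ℕ}, n ≤ p.length →
    p.support[n]? = some (p.getVert n) := by
  induction p with
  | nil =>
    intro n hn
    have hn0 : n = 0 := by simpa using hn
    subst hn0; rfl
  | cons h q ih =>
    intro n hn
    match n with
    | 0 =>
      rw [SimpleGraph.Walk.support_cons, List.getElem?_cons_zero,
        SimpleGraph.Walk.getVert_zero]
    | n + 1 =>
      rw [SimpleGraph.Walk.support_cons, List.getElem?_cons_succ,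
        SimpleGraph.Walk.getVert_cons_succ]
      exact ih (by simpa using hn)

lemma support_getElem?_eq_none {u v : V} (p : G.Walk u v) {n : ℕ} (hn : p.length < n) :
    p.support[n]? = none := by
  apply List.getElem?_eq_none
  rw [SimpleGraph.Walk.length_support]
  omega

/-- A walk is determined by its support. -/
lemma walk_eq_of_support_eq {u v : V} (p : G.Walk u v) :
    ∀ (q : G.Walk u v), p.support = q.support → p = q := by
  induction p with
  | nil =>
    intro q hq
    cases q with
    | nil => rfl
    | cons h r =>
      exfalso
      simp only [SimpleGraph.Walk.support_nil, SimpleGraph.Walk.support_cons,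
        List.cons.injEq, true_and] at hq
      exact r.support_ne_nil hq.symm
  | cons h p ih =>
    intro q hq
    cases q with
    | nil =>
      exfalso
      simp only [SimpleGraph.Walk.support_nil, SimpleGraph.Walk.support_cons,
        List.cons.injEq, true_and] at hq
      exact p.support_ne_nil hq
    | cons h' r =>
      simp only [SimpleGraph.Walk.support_cons, List.cons.injEq, true_and] at hq
      have hq2 := hq
      rw [p.support_eq_cons, r.support_eq_cons] at hq2
      obtain ⟨hw, -⟩ := List.cons_eq_cons.mp hq2
      subst hw
      rw [ih r hq]

/-- Take the first `n` darts of a walk. -/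
def wtake {u v : V} : (p : G.Walk u v) → (n : ℕ) → G.Walk u (p.getVert n)
  | p, 0 => (SimpleGraph.Walk.nil : G.Walk u u).copy rfl (p.getVert_zero).symm
  | .nil, _ + 1 => SimpleGraph.Walk.nil
  | .cons h q, n + 1 => SimpleGraph.Walk.cons h (wtake q n)

lemma support_wtake {u v : V} : ∀ (p : G.Walk u v) (n : ℕ),
    (wtake p n).support = p.support.take (n + 1) := by
  intro p
  induction p with
  | nil =>
    intro n
    match n with
    | 0 => rfl
    | n + 1 => rfl
  | cons h q ih =>
    intro n
    match n with
    | 0 =>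
      show ((SimpleGraph.Walk.nil : G.Walk _ _).copy rfl _).support = _
      rw [SimpleGraph.Walk.support_copy, SimpleGraph.Walk.support_nil,
        SimpleGraph.Walk.support_cons]
      rfl
    | n + 1 =>
      show (SimpleGraph.Walk.cons h (wtake q n)).support = _
      rw [SimpleGraph.Walk.support_cons, ih n, SimpleGraph.Walk.support_cons]
      rfl

lemma support_drop {u v : V} : ∀ (p : G.Walk u v) (n : ℕ), n ≤ p.length →
    (p.drop n).support = p.support.drop n := by
  intro p
  induction p with
  | nil =>
    intro n hn
    have hn0 : n = 0 := by simpa using hn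
    subst hn0; rfl
  | cons h q ih =>
    intro n hn
    match n with
    | 0 =>
      show ((SimpleGraph.Walk.cons h q).copy _ rfl).support = _
      rw [SimpleGraph.Walk.support_copy]
      rfl
    | n + 1 =>
      show (q.drop n).support = _
      rw [ih n (by simpa using hn),
        SimpleGraph.Walk.support_cons]
      rfl

end ClawAux

/-- the claw `K_{1,3}` is not a shortest path graph. -/
theorem stmt_12 :
    ¬ ∃ (V : Type u) (G : SimpleGraph V) (a b : V), a ≠ b ∧
      Nonempty (SPG G a b ≃g completeBipartiteGraph (Fin 1) (Fin 3)) := by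
  rintro ⟨V, G, a, b, hab, ⟨e⟩⟩
  classical
  set d := G.dist a b with hd
  -- the center and the three leaves
  set C : Geodesic G a b := e.symm (Sum.inl 0) with hC
  set Uf : Fin 3 → Geodesic G a b := fun k => e.symm (Sum.inr k) with hUf
  -- support lengths
  have hlen : ∀ (P : Geodesic G a b), P.1.support.length = d + 1 := by
    intro P
    rw [SimpleGraph.Walk.length_support, P.2.2]
  -- each leaf is adjacent to the center
  have hadjC : ∀ k : Fin 3, (SPG G a b).Adj (Uf k) C := by
    intro k
    have : (completeBipartiteGraph (Fin 1) (Fin 3)).Adj (Sum.inr k) (Sum.inl 0) := by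
      simp
    exact e.symm.map_rel_iff.mpr this
  -- leaves are pairwise non-adjacent
  have hnadj : ∀ k l : Fin 3, ¬ (SPG G a b).Adj (Uf k) (Uf l) := by
    intro k l h
    have := e.symm.map_rel_iff.mp (h : (SPG G a b).Adj (e.symm (Sum.inr k)) (e.symm (Sum.inr l)))
    simp at this
  -- leaves are pairwise distinct
  have hUdist : ∀ k l : Fin 3, k ≠ l → Uf k ≠ Uf l := by
    intro k l hkl h
    exact hkl (Sum.inr_injective (e.symm.injective h))
  -- extract the diff indices
  choose i hi hiu using hadjC
  -- agreement away from the diff index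
  have hagree : ∀ (k : Fin 3) (m : ℕ), m ≠ i k →
      (Uf k).1.support[m]? = C.1.support[m]? := by
    intro k m hm
    by_contra hne
    exact hm (hiu k m hne)
  -- the diff indices are valid positions
  have hibound : ∀ k : Fin 3, i k ≤ d := by
    intro k
    by_contra hgt
    apply hi k
    rw [ClawAux.support_getElem?_eq_none _ (by rw [(Uf k).2.2]; omega),
      ClawAux.support_getElem?_eq_none _ (by rw [C.2.2]; omega)]
  -- the diff indices are pairwise distinct
  have hidist : ∀ k l : Fin 3, k ≠ l → i k ≠ i l := by
    intro k l hkl hii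
    by_cases hsame : (Uf k).1.support[i k]? = (Uf l).1.support[i k]?
    · -- then the two walks agree everywhere, contradiction
      apply hUdist k l hkl
      apply Subtype.ext
      apply ClawAux.walk_eq_of_support_eq
      apply List.ext_getElem?
      intro m
      by_cases hm : m = i k
      · subst hm; exact hsame
      · rw [hagree k m hm, ← hagree l m (by rw [← hii] at *; exact hm)]
    · -- then they would be adjacent, contradiction
      apply hnadj k l
      refine ⟨i k, hsame, ?_⟩
      intro m hm
      by_contra hmne
      have h1 : (Uf k).1.support[m]? = C.1.support[m]? := hagree k m hmne
      have h2 : (Uf l).1.support[m]? = C.1.support[m]? :=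
        hagree l m (by rw [← hii]; exact hmne)
      exact hm (h1.trans h2.symm)
  -- choose two leaves whose diff indices are at least 2 apart
  obtain ⟨k, l, hkl2⟩ : ∃ k l : Fin 3, i k + 2 ≤ i l := by
    have h01 := hidist 0 1 (by decide)
    have h02 := hidist 0 2 (by decide)
    have h12 := hidist 1 2 (by decide)
    have key : ∀ x y z : ℕ, x ≠ y → x ≠ z → y ≠ z →
        (x + 2 ≤ y) ∨ (x + 2 ≤ z) ∨ (y + 2 ≤ x) ∨ (y + 2 ≤ z) ∨ (z + 2 ≤ x) ∨ (z + 2 ≤ y) := by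
      intro x y z hxy hxz hyz; omega
    rcases key (i 0) (i 1) (i 2) h01 h02 h12 with h | h | h | h | h | h
    exacts [⟨0, 1, h⟩, ⟨0, 2, h⟩, ⟨1, 0, h⟩, ⟨1, 2, h⟩, ⟨2, 0, h⟩, ⟨2, 1, h⟩]
  set U : Geodesic G a b := Uf k with hU
  set W : Geodesic G a b := Uf l with hW
  set iU : ℕ := i k with hiU
  set jW : ℕ := i l with hjW
  have hjd : jW ≤ d := hibound l
  have hiUd : iU + 2 ≤ d := le_trans hkl2 hjd
  -- the crossover point
  have hmid : U.1.getVert (iU + 1) = W.1.getVert (iU + 1) := by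
    have h1 : U.1.support[iU + 1]? = C.1.support[iU + 1]? := hagree k _ (by omega)
    have h2 : W.1.support[iU + 1]? = C.1.support[iU + 1]? := hagree l _ (by omega)
    have e1 : U.1.support[iU + 1]? = some (U.1.getVert (iU + 1)) :=
      ClawAux.support_getElem?_eq _ (by rw [U.2.2]; omega)
    have e2 : W.1.support[iU + 1]? = some (W.1.getVert (iU + 1)) :=
      ClawAux.support_getElem?_eq _ (by rw [W.2.2]; omega)
    have := e1.symm.trans ((h1.trans h2.symm).trans e2)
    exact Option.some_injective _ this
  -- the crossover walk
  set X0 : G.Walk a b :=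
    (ClawAux.wtake U.1 (iU + 1)).append ((W.1.drop (iU + 1)).copy hmid.symm rfl) with hX0
  have hXsupp : X0.support = U.1.support.take (iU + 2) ++ W.1.support.drop (iU + 2) := by
    rw [hX0, SimpleGraph.Walk.support_append, ClawAux.support_wtake,
      SimpleGraph.Walk.support_copy, ClawAux.support_drop _ _ (by rw [W.2.2]; omega),
      List.tail_drop]
  have htakelen : (U.1.support.take (iU + 2)).length = iU + 2 := by
    rw [List.length_take, hlen U]
    omega
  -- support of X0 at low and high indices
  have hXlo : ∀ m : ℕ, m < iU + 2 → X0.support[m]? = U.1.support[m]? := by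
    intro m hm
    rw [hXsupp, List.getElem?_append, if_pos (by omega), List.getElem?_take, if_pos hm]
  have hXhi : ∀ m : ℕ, iU + 2 ≤ m → X0.support[m]? = W.1.support[m]? := by
    intro m hm
    rw [hXsupp, List.getElem?_append, if_neg (by omega), htakelen, List.getElem?_drop]
    congr 1
    omega
  -- X0 has the right length
  have hXlen : X0.length = G.dist a b := by
    have : X0.support.length = X0.length + 1 := SimpleGraph.Walk.length_support X0
    rw [hXsupp, List.length_append, htakelen, List.length_drop, hlen W] at this
    omega
  set X : Geodesic G a b := ⟨X0, X0.isPath_of_length_eq_dist hXlen, hXlen⟩ with hX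
  -- X is adjacent to U
  have hadjXU : (SPG G a b).Adj X U := by
    refine ⟨jW, ?_, ?_⟩
    · show X0.support[jW]? ≠ U.1.support[jW]?
      rw [hXhi jW (by omega), hagree k jW (by omega)]
      exact hi l
    · intro m hm
      by_contra hmne
      apply hm
      show X0.support[m]? = U.1.support[m]?
      by_cases hlow : m < iU + 2
      · exact hXlo m hlow
      · rw [hXhi m (by omega), hagree l m hmne, hagree k m (by omega)]
  -- by the claw structure, X must be the center C
  have hXC : X = C := by
    have hadj' : (completeBipartiteGraph (Fin 1) (Fin 3)).Adj (e X) (e U) :=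
      e.map_rel_iff.mpr hadjXU
    have heU : e U = Sum.inr k := by rw [hU, hUf]; exact e.apply_symm_apply _
    rw [heU] at hadj'
    rcases hex : e X with y | y
    case inr => rw [hex] at hadj'; simp at hadj'
    have : e X = Sum.inl 0 := by rw [hex]; congr; exact Subsingleton.elim _ _
    calc X = e.symm (e X) := (e.symm_apply_apply _).symm
      _ = e.symm (Sum.inl 0) := by rw [this]
      _ = C := rfl
  -- but X differs from C at index iU
  have : X0.support[iU]? = U.1.support[iU]? := hXlo iU (by omega)
  rw [show X0 = X.1 from rfl, hXC] at this
  exact hi k this.symm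
end

section
/- For every n ≥ 1, the complete graph Kₙ is a shortest path graph. Moreover, it has a base graph in which every (a,b)-geodesic passes through some vertex through which no other (a,b)-geodesic passes (every vertex of the shortest path graph has the unique vertex-path property). Concretely, the graph G with V(G) = {a, v₁,…,vₙ, w, b} and E(G) = {a vᵢ, vᵢ w : i = 1,…,n} ∪ {w b} satisfies S(G,a,b) ≅ Kₙ. -/
open SimpleGraph

variable {V : Type*}

/-- `U` has the unique vertex-path property: `U` is the unique `(a,b)`-geodesic
in `G` passing through some vertex `v`. -/
def UVP (G : SimpleGraph V) (a b : V) (U : Geodesic G a b) : Prop :=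
  ∃ v : V, v ∈ U.1.support ∧ ∀ W : Geodesic G a b, v ∈ W.1.support → W = U

/-- `Kₙ` is a shortest path graph via the concrete base graph
`V(G) = {a, v₁, …, vₙ, w, b}`, `E(G) = {a vᵢ, vᵢ w : i} ∪ {w b}`; moreover every
vertex of the shortest path graph has the unique vertex-path property. -/
theorem stmt_13 (n : ℕ) (hn : 1 ≤ n) :
    let Vtx := Fin n ⊕ Fin 3
    let a : Vtx := Sum.inr 0
    let w : Vtx := Sum.inr 1
    let b : Vtx := Sum.inr 2
    let G : SimpleGraph Vtx := SimpleGraph.fromRel fun x y =>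
      (x = a ∧ ∃ i, y = Sum.inl i) ∨ ((∃ i, x = Sum.inl i) ∧ y = w) ∨ (x = w ∧ y = b)
    Nonempty (SPG G a b ≃g completeGraph (Fin n)) ∧
      ∀ U : Geodesic G a b, UVP G a b U := by
  intro Vtx a w b G
  have ha : a = Sum.inr 0 := rfl
  have hw : w = Sum.inr 1 := rfl
  have hb : b = Sum.inr 2 := rfl
  have hG : ∀ x y : Vtx, G.Adj x y ↔ x ≠ y ∧
      (((x = a ∧ ∃ i, y = Sum.inl i) ∨ ((∃ i, x = Sum.inl i) ∧ y = w) ∨ (x = w ∧ y = b)) ∨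
       ((y = a ∧ ∃ i, x = Sum.inl i) ∨ ((∃ i, y = Sum.inl i) ∧ x = w) ∨ (y = w ∧ x = b))) :=
    fun x y => SimpleGraph.fromRel_adj _ x y
  clear_value a w b G
  -- inequality facts
  have naw : a ≠ w := by rw [ha, hw]; exact fun h => absurd (Sum.inr_injective h) (by decide)
  have nab : a ≠ b := by rw [ha, hb]; exact fun h => absurd (Sum.inr_injective h) (by decide)
  have nwb : w ≠ b := by rw [hw, hb]; exact fun h => absurd (Sum.inr_injective h) (by decide)
  have nla : ∀ i : Fin n, (Sum.inl i : Vtx) ≠ a := fun i => by rw [ha]; exact Sum.inl_ne_inr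
  have nlw : ∀ i : Fin n, (Sum.inl i : Vtx) ≠ w := fun i => by rw [hw]; exact Sum.inl_ne_inr
  have nlb : ∀ i : Fin n, (Sum.inl i : Vtx) ≠ b := fun i => by rw [hb]; exact Sum.inl_ne_inr
  -- basic adjacency facts
  have adj_av : ∀ i : Fin n, G.Adj a (Sum.inl i) := fun i =>
    (hG a (Sum.inl i)).mpr ⟨fun h => nla i h.symm, Or.inl (Or.inl ⟨rfl, i, rfl⟩)⟩
  have adj_vw : ∀ i : Fin n, G.Adj (Sum.inl i) w := fun i =>
    (hG _ w).mpr ⟨nlw i, Or.inl (Or.inr (Or.inl ⟨⟨i, rfl⟩, rfl⟩))⟩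
  have adj_wb : G.Adj w b :=
    (hG w b).mpr ⟨nwb, Or.inl (Or.inr (Or.inr ⟨rfl, rfl⟩))⟩
  have nbr_a : ∀ x, G.Adj a x → ∃ i : Fin n, x = Sum.inl i := by
    intro x hx
    obtain ⟨-, h⟩ := (hG a x).mp hx
    rcases h with (⟨-, h⟩ | ⟨⟨i, hi⟩, -⟩ | ⟨h, -⟩) | (⟨-, ⟨i, hi⟩⟩ | ⟨h, -⟩ | ⟨-, h⟩)
    · exact h
    · exact absurd hi.symm (nla i)
    · exact absurd h naw
    · exact absurd hi.symm (nla i)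
    · exact h
    · exact absurd h nab
  have nbr_b : ∀ x, G.Adj x b → x = w := by
    intro x hx
    obtain ⟨-, h⟩ := (hG x b).mp hx
    rcases h with (⟨-, ⟨i, hi⟩⟩ | ⟨-, hbw⟩ | ⟨h, -⟩) | (⟨hba, -⟩ | ⟨⟨i, hi⟩, -⟩ | ⟨hbw, -⟩)
    · exact absurd hi.symm (nlb i)
    · exact absurd hbw.symm nwb
    · exact h
    · exact absurd hba.symm nab
    · exact absurd hi.symm (nlb i)
    · exact absurd hbw.symm nwb
  have nbr_v : ∀ (i : Fin n) x, G.Adj (Sum.inl i) x → x = a ∨ x = w := by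
    intro i x hx
    obtain ⟨-, h⟩ := (hG _ x).mp hx
    rcases h with (⟨h, -⟩ | ⟨-, h⟩ | ⟨h, -⟩) | (⟨h, -⟩ | ⟨-, h⟩ | ⟨h, -⟩)
    · exact absurd h (nla i)
    · exact Or.inr h
    · exact absurd h (nlw i)
    · exact Or.inl h
    · exact absurd h (nlw i)
    · exact Or.inr h
  -- every walk ending at b has the right length lower bounds
  have hlen : ∀ (x y : Vtx) (p : G.Walk x y), y = b →
      (x = a → 3 ≤ p.length) ∧ ((∃ i : Fin n, x = Sum.inl i) → 2 ≤ p.length) ∧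
        (x = w → 1 ≤ p.length) := by
    intro x y p
    induction p with
    | nil =>
      intro hyb
      subst hyb
      exact ⟨fun h => absurd h.symm nab, fun ⟨i, h⟩ => absurd h.symm (nlb i),
        fun h => absurd h.symm nwb⟩
    | @cons u v _ h q ih =>
      intro hyb
      have ihq := ih hyb
      refine ⟨fun hu => ?_, fun hu => ?_, fun hu => ?_⟩
      · subst hu
        obtain ⟨i, rfl⟩ := nbr_a _ h
        have := ihq.2.1 ⟨i, rfl⟩
        simp only [SimpleGraph.Walk.length_cons]
        omega
      · obtain ⟨i, rfl⟩ := hu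
        rcases nbr_v i _ h with rfl | rfl
        · have := ihq.1 rfl
          simp only [SimpleGraph.Walk.length_cons]
          omega
        · have := ihq.2.2 rfl
          simp only [SimpleGraph.Walk.length_cons]
          omega
      · simp only [SimpleGraph.Walk.length_cons]
        omega
  -- distance is 3
  have i0 : Fin n := ⟨0, hn⟩
  have hdist : G.dist a b = 3 := by
    have h1 : G.dist a b ≤ 3 := by
      have h := SimpleGraph.dist_le (SimpleGraph.Walk.cons (adj_av i0)
        (SimpleGraph.Walk.cons (adj_vw i0) (SimpleGraph.Walk.cons adj_wb SimpleGraph.Walk.nil)))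
      simpa using h
    have h2 : 3 ≤ G.dist a b := by
      obtain ⟨p, hp⟩ := SimpleGraph.Reachable.exists_walk_length_eq_dist
        (⟨SimpleGraph.Walk.cons (adj_av i0) (SimpleGraph.Walk.cons (adj_vw i0)
          (SimpleGraph.Walk.cons adj_wb SimpleGraph.Walk.nil))⟩ : G.Reachable a b)
      rw [← hp]
      exact (hlen a b p rfl).1 rfl
    omega
  -- the canonical geodesics
  let geod : Fin n → Geodesic G a b := fun i =>
    ⟨SimpleGraph.Walk.cons (adj_av i)
      (SimpleGraph.Walk.cons (adj_vw i) (SimpleGraph.Walk.cons adj_wb SimpleGraph.Walk.nil)),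
      by
        constructor
        · rw [SimpleGraph.Walk.isPath_def]
          show List.Nodup [a, Sum.inl i, w, b]
          refine List.nodup_cons.mpr ⟨?_, List.nodup_cons.mpr ⟨?_, List.nodup_cons.mpr
            ⟨?_, List.nodup_singleton b⟩⟩⟩
          · intro hmem
            rcases List.mem_cons.mp hmem with h | hmem
            · exact nla _ h.symm
            rcases List.mem_cons.mp hmem with h | hmem
            · exact naw h
            rcases List.mem_cons.mp hmem with h | hmem
            · exact nab h
            · exact absurd hmem List.not_mem_nil
          · intro hmem
            rcases List.mem_cons.mp hmem with h | hmem
            · exact nlw _ h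
            rcases List.mem_cons.mp hmem with h | hmem
            · exact nlb _ h
            · exact absurd hmem List.not_mem_nil
          · intro hmem
            rcases List.mem_cons.mp hmem with h | hmem
            · exact nwb h
            · exact absurd hmem List.not_mem_nil
        · rw [hdist]
          rfl⟩
  have hsupp : ∀ i : Fin n, (geod i).1.support = [a, Sum.inl i, w, b] := fun i => rfl
  -- classification of geodesics
  have hclass : ∀ U : Geodesic G a b, ∃ i : Fin n, U = geod i := by
    rintro ⟨p, hpath, hplen⟩
    rw [hdist] at hplen
    cases p with
    | nil => simp at hplen
    | cons h1 q =>
      cases q with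
      | nil => simp at hplen
      | cons h2 q2 =>
        cases q2 with
        | nil => simp at hplen
        | cons h3 q3 =>
          cases q3 with
          | cons h4 q4 => simp at hplen
          | nil =>
            obtain ⟨i, rfl⟩ := nbr_a _ h1
            have := nbr_b _ h3
            subst this
            exact ⟨i, rfl⟩
  have geod_inj : Function.Injective geod := by
    intro i j hij
    have h2 : ([a, Sum.inl i, w, b] : List Vtx) = [a, Sum.inl j, w, b] := by
      rw [← hsupp, ← hsupp, hij]
    simp only [List.cons.injEq] at h2
    exact Sum.inl_injective h2.2.1
  -- adjacency in SPG
  have hadj : ∀ i j : Fin n, (SPG G a b).Adj (geod i) (geod j) ↔ i ≠ j := by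
    intro i j
    constructor
    · rintro ⟨k, hk, -⟩ rfl
      exact hk rfl
    · intro hij
      refine ⟨1, ?_, ?_⟩
      · show (geod i).1.support[1]? ≠ (geod j).1.support[1]?
        rw [hsupp, hsupp]
        intro hsome
        rw [List.getElem?_cons_succ, List.getElem?_cons_zero,
          List.getElem?_cons_succ, List.getElem?_cons_zero] at hsome
        exact hij (Sum.inl_injective (Option.some_injective _ hsome))
      · intro k hk
        have hk' : (geod i).1.support[k]? ≠ (geod j).1.support[k]? := hk
        rw [hsupp, hsupp] at hk'
        match k with
        | 0 => exact absurd rfl hk'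
        | 1 => rfl
        | 2 => exact absurd rfl hk'
        | 3 => exact absurd rfl hk'
        | (m+4) =>
          exfalso
          apply hk'
          rw [List.getElem?_eq_none (by simp), List.getElem?_eq_none (by simp)]
  constructor
  · -- the isomorphism
    have hbij : Function.Bijective geod := ⟨geod_inj, fun U => (hclass U).imp fun i h => h.symm⟩
    let e := Equiv.ofBijective geod hbij
    refine ⟨⟨e.symm, ?_⟩⟩
    intro U W
    obtain ⟨i, rfl⟩ := hclass U
    obtain ⟨j, rfl⟩ := hclass W
    have hi : e.symm (geod i) = i := e.symm_apply_apply i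
    have hj : e.symm (geod j) = j := e.symm_apply_apply j
    rw [hi, hj, hadj]
    exact SimpleGraph.top_adj i j
  · -- unique vertex-path property
    intro U
    obtain ⟨i, rfl⟩ := hclass U
    refine ⟨Sum.inl i, ?_, ?_⟩
    · rw [hsupp]
      exact List.mem_cons_of_mem _ List.mem_cons_self
    · intro W hW
      obtain ⟨j, rfl⟩ := hclass W
      rw [hsupp] at hW
      rcases List.mem_cons.mp hW with h | hW
      · exact absurd h (nla i)
      rcases List.mem_cons.mp hW with h | hW
      · exact congrArg geod (Sum.inl_injective h).symm
      rcases List.mem_cons.mp hW with h | hW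
      · exact absurd h (nlw i)
      rcases List.mem_cons.mp hW with h | hW
      · exact absurd h (nlb i)
      · exact absurd hW List.not_mem_nil
end

section
/- Let H = S(G,a,b) be a shortest path graph in which (a,b)-geodesics have exactly two index levels, and let U and W be two vertex-disjoint maximal cliques in H whose difference indices are 1 and 2 respectively. Then the graph H' obtained from H by adding one new vertex X adjacent to every vertex of U and every vertex of W is a shortest path graph; moreover every vertex of H with the unique vertex-path property retains it in H'. -/
open SimpleGraph

variable {V : Type*}

namespace Stmt17

variable {G : SimpleGraph V} {a b : V}

/-- middle vertex 1 of a geodesic -/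
def m1 (p : Geodesic G a b) : V := p.1.getVert 1
/-- middle vertex 2 of a geodesic -/
def m2 (p : Geodesic G a b) : V := p.1.getVert 2

lemma walk_decomp {p : G.Walk a b} (hl : p.length = 3) :
    ∃ (x y : V) (h1 : G.Adj a x) (h2 : G.Adj x y) (h3 : G.Adj y b),
      p = Walk.cons h1 (Walk.cons h2 (Walk.cons h3 Walk.nil)) := by
  cases p with
  | nil => simp at hl
  | cons h1 q =>
    cases q with
    | nil => simp at hl
    | cons h2 r =>
      cases r with
      | nil => simp at hl
      | cons h3 s =>
        cases s with
        | nil => exact ⟨_, _, h1, h2, h3, rfl⟩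
        | cons h4 t => simp [Walk.length_cons] at hl

variable (hdist : G.dist a b = 3)
include hdist

lemma geo_decomp (p : Geodesic G a b) :
    ∃ (h1 : G.Adj a (m1 p)) (h2 : G.Adj (m1 p) (m2 p)) (h3 : G.Adj (m2 p) b),
      p.1 = Walk.cons h1 (Walk.cons h2 (Walk.cons h3 Walk.nil)) := by
  obtain ⟨x, y, h1, h2, h3, he⟩ := walk_decomp (p.2.2.trans hdist)
  have hx : m1 p = x := by show p.1.getVert 1 = x; rw [he]; rfl
  have hy : m2 p = y := by show p.1.getVert 2 = y; rw [he]; rfl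
  subst hx hy
  exact ⟨h1, h2, h3, he⟩

lemma adj_a_m1 (p : Geodesic G a b) : G.Adj a (m1 p) := (geo_decomp hdist p).choose
lemma adj_m1_m2 (p : Geodesic G a b) : G.Adj (m1 p) (m2 p) :=
  (geo_decomp hdist p).choose_spec.choose
lemma adj_m2_b (p : Geodesic G a b) : G.Adj (m2 p) b :=
  (geo_decomp hdist p).choose_spec.choose_spec.choose

lemma support_eq (p : Geodesic G a b) : p.1.support = [a, m1 p, m2 p, b] := by
  obtain ⟨h1, h2, h3, he⟩ := geo_decomp hdist p
  rw [he]; rfl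

lemma support_nodup' (p : Geodesic G a b) : ([a, m1 p, m2 p, b] : List V).Nodup := by
  rw [← support_eq hdist p]; exact p.2.1.support_nodup

lemma geo_ext {p q : Geodesic G a b} (h1 : m1 p = m1 q) (h2 : m2 p = m2 q) : p = q := by
  obtain ⟨x, y, a1, a2, a3, hp⟩ := walk_decomp (p.2.2.trans hdist)
  obtain ⟨x', y', b1, b2, b3, hq⟩ := walk_decomp (q.2.2.trans hdist)
  have e1 : m1 p = x := by show p.1.getVert 1 = x; rw [hp]; rfl
  have e2 : m2 p = y := by show p.1.getVert 2 = y; rw [hp]; rfl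
  have e1' : m1 q = x' := by show q.1.getVert 1 = x'; rw [hq]; rfl
  have e2' : m2 q = y' := by show q.1.getVert 2 = y'; rw [hq]; rfl
  have hx : x = x' := e1 ▸ e1' ▸ h1
  have hy : y = y' := e2 ▸ e2' ▸ h2
  subst hx hy
  exact Subtype.ext (hp.trans hq.symm)

lemma not_adj_ab : ¬ G.Adj a b := by
  intro h
  have := G.dist_le (Walk.cons h Walk.nil)
  simp [hdist] at this

lemma no_two_path (z : V) (h1 : G.Adj a z) (h2 : G.Adj z b) : False := by
  have := G.dist_le (Walk.cons h1 (Walk.cons h2 Walk.nil))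
  simp [hdist] at this

lemma diff_spec (p q : Geodesic G a b) :
    diffIndices G a b p q = {i | (i = 1 ∧ m1 p ≠ m1 q) ∨ (i = 2 ∧ m2 p ≠ m2 q)} := by
  ext i
  simp only [diffIndices, Set.mem_setOf_eq, support_eq hdist p, support_eq hdist q]
  match i with
  | 0 => simp
  | 1 => simp
  | 2 => simp
  | 3 => simp
  | (n+4) => simp [List.getElem?_eq_none]

lemma adj_iff (p q : Geodesic G a b) : (SPG G a b).Adj p q ↔
    ((m1 p ≠ m1 q ∧ m2 p = m2 q) ∨ (m1 p = m1 q ∧ m2 p ≠ m2 q)) := by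
  show (∃! i, i ∈ diffIndices G a b p q) ↔ _
  rw [diff_spec hdist]
  constructor
  · rintro ⟨i, hi, hu⟩
    simp only [Set.mem_setOf_eq] at hi hu
    rcases hi with ⟨rfl, h⟩ | ⟨rfl, h⟩
    · left; refine ⟨h, ?_⟩
      by_contra h2
      exact absurd (hu 2 (Or.inr ⟨rfl, h2⟩)) (by norm_num)
    · right; refine ⟨?_, h⟩
      by_contra h1
      exact absurd (hu 1 (Or.inl ⟨rfl, h1⟩)) (by norm_num)
  · rintro (⟨h1, h2⟩ | ⟨h1, h2⟩)
    · exact ⟨1, Or.inl ⟨rfl, h1⟩, by rintro j (⟨rfl, _⟩ | ⟨rfl, hc⟩) <;> [rfl; exact absurd h2 hc]⟩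
    · exact ⟨2, Or.inr ⟨rfl, h2⟩, by rintro j (⟨rfl, hc⟩ | ⟨rfl, _⟩) <;> [exact absurd h1 hc; rfl]⟩

lemma diff_one {p q : Geodesic G a b} (h : diffIndices G a b p q = {1}) :
    m1 p ≠ m1 q ∧ m2 p = m2 q := by
  rw [diff_spec hdist] at h
  constructor
  · have : (1:ℕ) ∈ ({1} : Set ℕ) := rfl
    rw [← h] at this
    rcases this with ⟨_, h⟩ | ⟨h, _⟩
    · exact h
    · norm_num at h
  · by_contra hc
    have : (2:ℕ) ∈ {i : ℕ | (i = 1 ∧ m1 p ≠ m1 q) ∨ (i = 2 ∧ m2 p ≠ m2 q)} := Or.inr ⟨rfl, hc⟩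
    rw [h] at this
    norm_num at this

lemma diff_two {p q : Geodesic G a b} (h : diffIndices G a b p q = {2}) :
    m1 p = m1 q ∧ m2 p ≠ m2 q := by
  rw [diff_spec hdist] at h
  constructor
  · by_contra hc
    have : (1:ℕ) ∈ {i : ℕ | (i = 1 ∧ m1 p ≠ m1 q) ∨ (i = 2 ∧ m2 p ≠ m2 q)} := Or.inl ⟨rfl, hc⟩
    rw [h] at this
    norm_num at this
  · have : (2:ℕ) ∈ ({2} : Set ℕ) := rfl
    rw [← h] at this
    rcases this with ⟨h, _⟩ | ⟨_, h⟩
    · norm_num at h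
    · exact h

lemma mem_support_iff (p : Geodesic G a b) (v : V) :
    v ∈ p.1.support ↔ v = a ∨ v = m1 p ∨ v = m2 p ∨ v = b := by
  rw [support_eq hdist]; simp

lemma eq_m1_of_mem (p q : Geodesic G a b) (h : m1 p ∈ q.1.support) : m1 q = m1 p := by
  rcases (mem_support_iff hdist q _).mp h with h | h | h | h
  · exact absurd h.symm (by have := support_nodup' hdist p; simp at this; tauto)
  · exact h.symm
  · exact absurd (h ▸ adj_m2_b hdist q) (fun hh => no_two_path hdist _ (adj_a_m1 hdist p) hh)
  · exact absurd (h ▸ adj_a_m1 hdist p) (not_adj_ab hdist)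

lemma eq_m2_of_mem (p q : Geodesic G a b) (h : m2 p ∈ q.1.support) : m2 q = m2 p := by
  rcases (mem_support_iff hdist q _).mp h with h | h | h | h
  · exact absurd (h ▸ adj_m2_b hdist p) (fun hh => not_adj_ab hdist hh)
  · exact absurd (h ▸ adj_a_m1 hdist q) (fun hh => no_two_path hdist _ hh (adj_m2_b hdist p))
  · exact h.symm
  · exact absurd h (by have := support_nodup' hdist p; simp at this; tauto)

end Stmt17

open Stmt17

/-- joining a new vertex to two disjoint maximal cliques with difference
indices 1 and 2 in a two-index-level shortest path graph yields a shortest path graph,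
preserving the unique vertex-path property. -/
theorem stmt_17 {V : Type u} (G : SimpleGraph V) (a b : V) (hab : a ≠ b)
    (hdist : G.dist a b = 3)
    (𝒰 𝒲 : Set (Geodesic G a b))
    (h𝒰 : (SPG G a b).IsClique 𝒰) (hmax𝒰 : ∀ K', (SPG G a b).IsClique K' → 𝒰 ⊆ K' → K' = 𝒰)
    (h𝒲 : (SPG G a b).IsClique 𝒲) (hmax𝒲 : ∀ K', (SPG G a b).IsClique K' → 𝒲 ⊆ K' → K' = 𝒲)
    (hdisj : Disjoint 𝒰 𝒲)
    (hd𝒰 : ∀ p ∈ 𝒰, ∀ q ∈ 𝒰, p ≠ q → diffIndices G a b p q = {1})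
    (hd𝒲 : ∀ p ∈ 𝒲, ∀ q ∈ 𝒲, p ≠ q → diffIndices G a b p q = {2}) :
    -- `H'`: the graph obtained from `SPG G a b` by adding one new vertex `Sum.inr ()`
    -- adjacent to every vertex of `𝒰` and every vertex of `𝒲`.
    let H' : SimpleGraph (Geodesic G a b ⊕ Unit) := SimpleGraph.fromRel fun x y =>
      (∃ p q, x = Sum.inl p ∧ y = Sum.inl q ∧ (SPG G a b).Adj p q) ∨
      (∃ p, x = Sum.inl p ∧ (p ∈ 𝒰 ∨ p ∈ 𝒲) ∧ y = Sum.inr ())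
    ∃ (V' : Type u) (G' : SimpleGraph V') (a' b' : V') (e : SPG G' a' b' ≃g H'),
      ∀ X : Geodesic G a b, UVP G a b X → UVP G' a' b' (e.symm (Sum.inl X)) := by
  intro H'
  classical
  have hH'def : H' = (SimpleGraph.fromRel fun x y =>
      (∃ p q, x = Sum.inl p ∧ y = Sum.inl q ∧ (SPG G a b).Adj p q) ∨
      (∃ p, x = Sum.inl p ∧ (p ∈ 𝒰 ∨ p ∈ 𝒲) ∧ y = Sum.inr ())) := rfl
  -- basic existence
  have hge : Nonempty (Geodesic G a b) := by
    have hr : G.Reachable a b := Reachable.of_dist_ne_zero (by rw [hdist]; norm_num)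
    obtain ⟨p, hp, hl⟩ := hr.exists_path_of_dist
    exact ⟨⟨p, hp, hl⟩⟩
  have hsingle : ∀ g : Geodesic G a b, (SPG G a b).IsClique {g} := fun g => by
    rw [SimpleGraph.isClique_iff]; exact Set.pairwise_singleton _ _
  have h𝒰ne : 𝒰.Nonempty := by
    rcases Set.eq_empty_or_nonempty 𝒰 with h | h
    · obtain ⟨g⟩ := hge
      have := hmax𝒰 {g} (hsingle g) (h ▸ Set.empty_subset _)
      rw [h] at this
      exact absurd this (by simp)
    · exact h
  have h𝒲ne : 𝒲.Nonempty := by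
    rcases Set.eq_empty_or_nonempty 𝒲 with h | h
    · obtain ⟨g⟩ := hge
      have := hmax𝒲 {g} (hsingle g) (h ▸ Set.empty_subset _)
      rw [h] at this
      exact absurd this (by simp)
    · exact h
  obtain ⟨p0, hp0⟩ := h𝒰ne
  obtain ⟨q0, hq0⟩ := h𝒲ne
  set u := m1 q0 with hu_def
  set w := m2 p0 with hw_def
  -- the cliques are determined by their common middle vertices
  have h𝒰sub : ∀ r ∈ 𝒰, m2 r = w := by
    intro r hr
    by_cases h : r = p0
    · rw [h]
    · exact ((diff_one hdist (hd𝒰 p0 hp0 r hr (fun he => h he.symm))).2).symm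
  have h𝒲sub : ∀ r ∈ 𝒲, m1 r = u := by
    intro r hr
    by_cases h : r = q0
    · rw [h]
    · exact ((diff_two hdist (hd𝒲 q0 hq0 r hr (fun he => h he.symm))).1).symm
  have h𝒰mem : ∀ q, m2 q = w → q ∈ 𝒰 := by
    intro q hq
    have hadj : ∀ r ∈ 𝒰, q ≠ r → (SPG G a b).Adj q r := by
      intro r hr hne
      refine (adj_iff hdist q r).mpr (Or.inl ⟨?_, hq.trans (h𝒰sub r hr).symm⟩)
      exact fun he => hne (geo_ext hdist he (hq.trans (h𝒰sub r hr).symm))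
    have hcl : (SPG G a b).IsClique (insert q 𝒰) := by
      rw [SimpleGraph.isClique_iff]
      intro x hx y hy hxy
      rcases hx with rfl | hx
      · rcases hy with rfl | hy
        · exact absurd rfl hxy
        · exact hadj y hy hxy
      · rcases hy with rfl | hy
        · exact (hadj x hx (Ne.symm hxy)).symm
        · exact h𝒰 hx hy hxy
    have := hmax𝒰 _ hcl (Set.subset_insert _ _)
    rw [← this]
    exact Set.mem_insert _ _
  have h𝒲mem : ∀ q, m1 q = u → q ∈ 𝒲 := by
    intro q hq
    have hadj : ∀ r ∈ 𝒲, q ≠ r → (SPG G a b).Adj q r := by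
      intro r hr hne
      refine (adj_iff hdist q r).mpr (Or.inr ⟨hq.trans (h𝒲sub r hr).symm, ?_⟩)
      exact fun he => hne (geo_ext hdist (hq.trans (h𝒲sub r hr).symm) he)
    have hcl : (SPG G a b).IsClique (insert q 𝒲) := by
      rw [SimpleGraph.isClique_iff]
      intro x hx y hy hxy
      rcases hx with rfl | hx
      · rcases hy with rfl | hy
        · exact absurd rfl hxy
        · exact hadj y hy hxy
      · rcases hy with rfl | hy
        · exact (hadj x hx (Ne.symm hxy)).symm
        · exact h𝒲 hx hy hxy
    have := hmax𝒲 _ hcl (Set.subset_insert _ _)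
    rw [← this]
    exact Set.mem_insert _ _
  -- facts about u and w
  have hadj_au : G.Adj a u := adj_a_m1 hdist q0
  have hadj_wb : G.Adj w b := adj_m2_b hdist p0
  have hne_au : a ≠ u := hadj_au.ne
  have hne_aw : a ≠ w := fun h => not_adj_ab hdist (by rw [h]; exact hadj_wb)
  have hne_ub : u ≠ b := fun h => not_adj_ab hdist (by rw [← h]; exact hadj_au)
  have hne_wb : w ≠ b := hadj_wb.ne
  have hne_uw : u ≠ w := fun h => no_two_path hdist u hadj_au (by rw [h]; exact hadj_wb)
  have huw_not_adj : ¬ G.Adj u w := by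
    intro hadj
    have hpath : (Walk.cons hadj_au (Walk.cons hadj (Walk.cons hadj_wb Walk.nil)) :
        G.Walk a b).IsPath := by
      rw [Walk.isPath_def]
      simp [hne_au, hne_aw, hab, hne_uw, hne_ub, hne_wb]
    let X0 : Geodesic G a b := ⟨_, hpath, by simp [hdist]⟩
    have hX0u : m1 X0 = u := rfl
    have hX0w : m2 X0 = w := rfl
    exact Set.disjoint_left.mp hdisj (h𝒰mem X0 hX0w) (h𝒲mem X0 hX0u)
  -- the new graph
  set G' : SimpleGraph V := G ⊔ SimpleGraph.fromEdgeSet {s(u, w)} with hG'def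
  have hle : G ≤ G' := le_sup_left
  have hG'adj : ∀ x y, G'.Adj x y ↔ G.Adj x y ∨ (x = u ∧ y = w) ∨ (x = w ∧ y = u) := by
    intro x y
    rw [hG'def, SimpleGraph.sup_adj, SimpleGraph.fromEdgeSet_adj]
    constructor
    · rintro (h | ⟨hmem, hne⟩)
      · exact Or.inl h
      · rw [Set.mem_singleton_iff, Sym2.eq_iff] at hmem
        exact Or.inr hmem
    · rintro (h | ⟨rfl, rfl⟩ | ⟨rfl, rfl⟩)
      · exact Or.inl h
      · exact Or.inr ⟨rfl, hne_uw⟩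
      · exact Or.inr ⟨Sym2.eq_swap, hne_uw.symm⟩
  have hedge : ∀ (p : Geodesic G a b), ∀ e ∈ p.1.edges, e ∈ G'.edgeSet := by
    intro p e he
    exact SimpleGraph.edgeSet_mono hle (p.1.edges_subset_edgeSet he)
  -- the new graph has distance 3
  have hmin : ∀ P : G'.Walk a b, 3 ≤ P.length := by
    intro P
    cases P with
    | nil => exact absurd rfl hab
    | cons h1 Q =>
      cases Q with
      | nil =>
        rcases (hG'adj a b).mp h1 with h | ⟨_, hb⟩ | ⟨ha, _⟩
        · exact absurd h (not_adj_ab hdist)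
        · exact absurd hb.symm hne_wb
        · exact absurd ha hne_aw
      | cons h2 R =>
        cases R with
        | nil =>
          rename_i z
          have ha : G.Adj a z := by
            rcases (hG'adj _ _).mp h1 with h | ⟨ha, _⟩ | ⟨ha, _⟩
            · exact h
            · exact absurd ha hne_au
            · exact absurd ha hne_aw
          have hb : G.Adj z b := by
            rcases (hG'adj _ _).mp h2 with h | ⟨_, hb⟩ | ⟨_, hb⟩
            · exact h
            · exact absurd hb.symm hne_wb
            · exact absurd hb.symm hne_ub
          exact (no_two_path hdist _ ha hb).elim
        | cons h3 S => simp only [Walk.length_cons]; omega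
  have hr' : G'.Reachable a b := ⟨p0.1.transfer G' (hedge p0)⟩
  have hdist' : G'.dist a b = 3 := by
    refine le_antisymm ?_ ?_
    · have := G'.dist_le (p0.1.transfer G' (hedge p0))
      rwa [Walk.length_transfer, p0.2.2, hdist] at this
    · obtain ⟨P, hP⟩ := hr'.exists_walk_length_eq_dist
      rw [← hP]
      exact hmin P
  -- the new geodesic
  have hau' : G'.Adj a u := (hG'adj a u).mpr (Or.inl hadj_au)
  have huw' : G'.Adj u w := (hG'adj u w).mpr (Or.inr (Or.inl ⟨rfl, rfl⟩))
  have hwb' : G'.Adj w b := (hG'adj w b).mpr (Or.inl hadj_wb)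
  have hXnewpath : (Walk.cons hau' (Walk.cons huw' (Walk.cons hwb' Walk.nil)) :
      G'.Walk a b).IsPath := by
    rw [Walk.isPath_def]
    simp [hne_au, hne_aw, hab, hne_uw, hne_ub, hne_wb]
  let Xnew : Geodesic G' a b := ⟨_, hXnewpath, by simp [hdist']⟩
  have hXu : m1 Xnew = u := rfl
  have hXw : m2 Xnew = w := rfl
  -- the embedding of old geodesics
  let oldG : Geodesic G a b → Geodesic G' a b := fun p =>
    ⟨p.1.transfer G' (hedge p), p.2.1.transfer _, by
      rw [Walk.length_transfer, p.2.2, hdist, hdist']⟩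
  have hsupp_old : ∀ p, (oldG p).1.support = p.1.support := fun p => Walk.support_transfer _ _
  have hm_old : ∀ p, m1 (oldG p) = m1 p ∧ m2 (oldG p) = m2 p := by
    intro p
    have h1 := support_eq hdist' (oldG p)
    rw [hsupp_old p, support_eq hdist p] at h1
    injection h1 with _ h1
    injection h1 with e1 h1
    injection h1 with e2 _
    exact ⟨e1.symm, e2.symm⟩
  have hold_not_new : ∀ p, oldG p ≠ Xnew := by
    intro p h
    have e1 : m1 p = u := by rw [← (hm_old p).1, h, hXu]
    have e2 : m2 p = w := by rw [← (hm_old p).2, h, hXw]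
    exact huw_not_adj (by rw [← e1, ← e2]; exact adj_m1_m2 hdist p)
  let g : Geodesic G a b ⊕ Unit → Geodesic G' a b := Sum.elim oldG (fun _ => Xnew)
  have hinj : Function.Injective g := by
    rintro (p | ⟨⟩) (q | ⟨⟩) hst
    · have e1 : m1 p = m1 q := by rw [← (hm_old p).1, ← (hm_old q).1]; exact congrArg m1 hst
      have e2 : m2 p = m2 q := by rw [← (hm_old p).2, ← (hm_old q).2]; exact congrArg m2 hst
      rw [geo_ext hdist e1 e2]
    · exact absurd hst (hold_not_new p)
    · exact absurd hst.symm (hold_not_new q)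
    · rfl
  have hsurj : Function.Surjective g := by
    intro P
    obtain ⟨x, y, h1, h2, h3, hPe⟩ := walk_decomp (P.2.2.trans hdist')
    have hm1P : m1 P = x := by show P.1.getVert 1 = x; rw [hPe]; rfl
    have hm2P : m2 P = y := by show P.1.getVert 2 = y; rw [hPe]; rfl
    have hax : G.Adj a x := by
      rcases (hG'adj a x).mp h1 with h | ⟨ha, _⟩ | ⟨ha, _⟩
      · exact h
      · exact absurd ha hne_au
      · exact absurd ha hne_aw
    have hyb : G.Adj y b := by
      rcases (hG'adj y b).mp h3 with h | ⟨_, hb⟩ | ⟨_, hb⟩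
      · exact h
      · exact absurd hb.symm hne_wb
      · exact absurd hb.symm hne_ub
    rcases (hG'adj x y).mp h2 with hxy | ⟨rfl, rfl⟩ | ⟨rfl, rfl⟩
    · have hnd : (Walk.cons hax (Walk.cons hxy (Walk.cons hyb Walk.nil)) :
          G.Walk a b).IsPath := by
        rw [Walk.isPath_def]
        have := P.2.1.support_nodup
        rw [hPe] at this
        simpa using this
      set QG : Geodesic G a b := ⟨_, hnd, by simp [hdist]⟩ with hQG
      have hgq : g (Sum.inl QG) = oldG QG := rfl
      refine ⟨Sum.inl QG, ?_⟩
      rw [hgq]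
      exact geo_ext hdist' (by rw [(hm_old QG).1, hm1P]; rfl)
        (by rw [(hm_old QG).2, hm2P]; rfl)
    · exact ⟨Sum.inr (), geo_ext hdist' (by rw [hm1P]; rfl) (by rw [hm2P]; rfl)⟩
    · exact (no_two_path hdist w hax hadj_wb).elim
  -- adjacency characterizations in H'
  have hH'1 : ∀ p q : Geodesic G a b,
      H'.Adj (Sum.inl p) (Sum.inl q) ↔ (SPG G a b).Adj p q := by
    intro p q
    rw [hH'def, SimpleGraph.fromRel_adj]
    constructor
    · rintro ⟨hne, h | h⟩
      · rcases h with ⟨p', q', hp', hq', h⟩ | ⟨p', _, _, h⟩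
        · rw [Sum.inl.injEq] at hp' hq'
          rw [hp', hq']; exact h
        · exact absurd h (by simp)
      · rcases h with ⟨p', q', hp', hq', h⟩ | ⟨p', _, _, h⟩
        · rw [Sum.inl.injEq] at hp' hq'
          rw [hp', hq']; exact h.symm
        · exact absurd h (by simp)
    · intro h
      exact ⟨by simp [h.ne], Or.inl (Or.inl ⟨p, q, rfl, rfl, h⟩)⟩
  have hH'2 : ∀ p : Geodesic G a b,
      H'.Adj (Sum.inl p) (Sum.inr ()) ↔ (p ∈ 𝒰 ∨ p ∈ 𝒲) := by
    intro p
    rw [hH'def, SimpleGraph.fromRel_adj]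
    constructor
    · rintro ⟨hne, h | h⟩
      · rcases h with ⟨p', q', _, hq', _⟩ | ⟨p', hp', hm, _⟩
        · exact absurd hq' (by simp)
        · rw [Sum.inl.injEq] at hp'
          rw [hp']; exact hm
      · rcases h with ⟨p', q', hp', _, _⟩ | ⟨p', hp', _, _⟩
        · exact absurd hp' (by simp)
        · exact absurd hp' (by simp)
    · intro h
      exact ⟨by simp, Or.inl (Or.inr ⟨p, rfl, h, rfl⟩)⟩
  have hH'4 : ¬ H'.Adj (Sum.inr ()) (Sum.inr ()) := fun h => h.ne rfl
  -- adjacency correspondence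
  have hAdjold : ∀ p q, (SPG G' a b).Adj (oldG p) (oldG q) ↔ (SPG G a b).Adj p q := by
    intro p q
    have hdd : diffIndices G' a b (oldG p) (oldG q) = diffIndices G a b p q := by
      ext i
      simp only [diffIndices, Set.mem_setOf_eq, hsupp_old]
    show (∃! i, i ∈ diffIndices G' a b (oldG p) (oldG q)) ↔ (∃! i, i ∈ diffIndices G a b p q)
    rw [hdd]
  have hAdjnew : ∀ p, (SPG G' a b).Adj (oldG p) Xnew ↔ (p ∈ 𝒰 ∨ p ∈ 𝒲) := by
    intro p
    rw [adj_iff hdist', (hm_old p).1, (hm_old p).2, hXu, hXw]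
    have hnotboth : ¬ (m1 p = u ∧ m2 p = w) := fun ⟨e1, e2⟩ =>
      huw_not_adj (by rw [← e1, ← e2]; exact adj_m1_m2 hdist p)
    constructor
    · rintro (⟨h3, h4⟩ | ⟨h3, h4⟩)
      · exact Or.inl (h𝒰mem p h4)
      · exact Or.inr (h𝒲mem p h3)
    · rintro (h | h)
      · have h4 : m2 p = w := h𝒰sub p h
        exact Or.inl ⟨fun e => hnotboth ⟨e, h4⟩, h4⟩
      · have h3 : m1 p = u := h𝒲sub p h
        exact Or.inr ⟨h3, fun e => hnotboth ⟨h3, e⟩⟩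
  have hAdjg : ∀ s t, (SPG G' a b).Adj (g s) (g t) ↔ H'.Adj s t := by
    rintro (p | ⟨⟩) (q | ⟨⟩)
    · rw [hH'1]; exact hAdjold p q
    · rw [hH'2]; exact hAdjnew p
    · rw [(SPG G' a b).adj_comm, H'.adj_comm, hH'2]; exact hAdjnew q
    · constructor
      · intro h
        exact absurd rfl h.ne
      · intro h
        exact absurd h hH'4
  -- build the isomorphism
  let eg : (Geodesic G a b ⊕ Unit) ≃ Geodesic G' a b := Equiv.ofBijective g ⟨hinj, hsurj⟩
  let e : SPG G' a b ≃g H' := ⟨eg.symm, by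
    intro P Q
    have h := hAdjg (eg.symm P) (eg.symm Q)
    rw [show g (eg.symm P) = P from eg.apply_symm_apply P,
        show g (eg.symm Q) = Q from eg.apply_symm_apply Q] at h
    exact h.symm⟩
  refine ⟨V, G', a, b, e, ?_⟩
  -- UVP preservation
  intro X hX
  show UVP G' a b (g (Sum.inl X))
  obtain ⟨v, hv, huniq⟩ := hX
  have hallP : ∀ P : Geodesic G' a b, (∃ p, P = oldG p) ∨ P = Xnew := by
    intro P
    obtain ⟨s, hs⟩ := hsurj P
    cases s with
    | inl p => exact Or.inl ⟨p, hs.symm⟩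
    | inr uu => exact Or.inr hs.symm
  -- it suffices to find a good witness
  have hsuff : ∀ v' : V, v' ∈ X.1.support → (∀ p : Geodesic G a b, v' ∈ p.1.support → p = X) →
      v' ∉ Xnew.1.support → UVP G' a b (g (Sum.inl X)) := by
    intro v' hmem hold hnew
    refine ⟨v', ?_, ?_⟩
    · show v' ∈ (oldG X).1.support
      rw [hsupp_old X]; exact hmem
    intro P hP
    rcases hallP P with ⟨p, rfl⟩ | rfl
    · rw [hsupp_old p] at hP
      exact congrArg oldG (hold p hP)
    · exact absurd hP hnew
  by_cases hva : v = a
  · exfalso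
    subst hva
    have e1 : p0 = X := huniq p0 p0.1.start_mem_support
    have e2 : q0 = X := huniq q0 q0.1.start_mem_support
    have : q0 ∈ 𝒰 := by rw [e2.trans e1.symm] at hq0 ⊢; exact hp0
    exact Set.disjoint_left.mp hdisj this hq0
  by_cases hvb : v = b
  · exfalso
    subst hvb
    have e1 : p0 = X := huniq p0 p0.1.end_mem_support
    have e2 : q0 = X := huniq q0 q0.1.end_mem_support
    have : q0 ∈ 𝒰 := by rw [e2.trans e1.symm] at hq0 ⊢; exact hp0
    exact Set.disjoint_left.mp hdisj this hq0
  by_cases hvu : v = u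
  · -- then 𝒲 = {X}; use m2 X as the new witness
    have hq0X : q0 = X := huniq q0
      ((mem_support_iff hdist q0 v).mpr (Or.inr (Or.inl hvu)))
    have hm1X : m1 X = u := by rw [← hq0X]
    have hXin𝒲 : X ∈ 𝒲 := h𝒲mem X hm1X
    have h𝒲X : ∀ r ∈ 𝒲, r = X := by
      intro r hr
      exact huniq r ((mem_support_iff hdist r v).mpr (Or.inr (Or.inl
        (by rw [h𝒲sub r hr, ← hvu]))))
    have hXnd := support_nodup' hdist X
    refine hsuff (m2 X) ((mem_support_iff hdist X _).mpr (Or.inr (Or.inr (Or.inl rfl)))) ?_ ?_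
    · intro p hp
      have e2 : m2 p = m2 X := eq_m2_of_mem hdist X p hp
      by_contra hne
      have hadjpX : (SPG G a b).Adj p X := (adj_iff hdist p X).mpr
        (Or.inl ⟨fun e => hne (geo_ext hdist e e2), e2⟩)
      have hcl : (SPG G a b).IsClique (insert p 𝒲) := by
        rw [SimpleGraph.isClique_iff]
        intro x hx y hy hxy
        rcases hx with rfl | hx
        · rcases hy with rfl | hy
          · exact absurd rfl hxy
          · rw [h𝒲X y hy]; exact hadjpX
        · rcases hy with rfl | hy
          · rw [h𝒲X x hx]; exact hadjpX.symm
          · exact h𝒲 hx hy hxy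
      have hins := hmax𝒲 _ hcl (Set.subset_insert _ _)
      have hpW : p ∈ 𝒲 := by rw [← hins]; exact Set.mem_insert _ _
      exact hne (h𝒲X p hpW)
    · intro hmemX
      rcases (mem_support_iff hdist' Xnew _).mp hmemX with h | h | h | h
      · rw [h] at hXnd; simp at hXnd
      · rw [hXu, ← hm1X] at h
        rw [h] at hXnd; simp at hXnd
      · rw [hXw] at h
        exact Set.disjoint_left.mp hdisj (h𝒰mem X h) hXin𝒲
      · rw [h] at hXnd; simp at hXnd
  by_cases hvw : v = w
  · -- then 𝒰 = {X}; use m1 X as the new witness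
    have hp0X : p0 = X := huniq p0
      ((mem_support_iff hdist p0 v).mpr (Or.inr (Or.inr (Or.inl hvw))))
    have hm2X : m2 X = w := by rw [← hp0X]
    have hXin𝒰 : X ∈ 𝒰 := h𝒰mem X hm2X
    have h𝒰X : ∀ r ∈ 𝒰, r = X := by
      intro r hr
      exact huniq r ((mem_support_iff hdist r v).mpr (Or.inr (Or.inr (Or.inl
        (by rw [h𝒰sub r hr, ← hvw])))))
    have hXnd := support_nodup' hdist X
    refine hsuff (m1 X) ((mem_support_iff hdist X _).mpr (Or.inr (Or.inl rfl))) ?_ ?_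
    · intro p hp
      have e1 : m1 p = m1 X := eq_m1_of_mem hdist X p hp
      by_contra hne
      have hadjpX : (SPG G a b).Adj p X := (adj_iff hdist p X).mpr
        (Or.inr ⟨e1, fun e => hne (geo_ext hdist e1 e)⟩)
      have hcl : (SPG G a b).IsClique (insert p 𝒰) := by
        rw [SimpleGraph.isClique_iff]
        intro x hx y hy hxy
        rcases hx with rfl | hx
        · rcases hy with rfl | hy
          · exact absurd rfl hxy
          · rw [h𝒰X y hy]; exact hadjpX
        · rcases hy with rfl | hy
          · rw [h𝒰X x hx]; exact hadjpX.symm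
          · exact h𝒰 hx hy hxy
      have hins := hmax𝒰 _ hcl (Set.subset_insert _ _)
      have hpU : p ∈ 𝒰 := by rw [← hins]; exact Set.mem_insert _ _
      exact hne (h𝒰X p hpU)
    · intro hmemX
      rcases (mem_support_iff hdist' Xnew _).mp hmemX with h | h | h | h
      · rw [h] at hXnd; simp at hXnd
      · rw [hXu] at h
        exact Set.disjoint_left.mp hdisj hXin𝒰 (h𝒲mem X h)
      · rw [hXw, ← hm2X] at h
        rw [h] at hXnd; simp at hXnd
      · rw [h] at hXnd; simp at hXnd
  · -- v avoids a, u, w, b: keep the same witness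
    refine hsuff v hv (fun p hp => huniq p hp) ?_
    intro hmemX
    rcases (mem_support_iff hdist' Xnew _).mp hmemX with h | h | h | h
    · exact hva h
    · exact hvu (h.trans hXu)
    · exact hvw (h.trans hXw)
    · exact hvb h
end
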